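/- arXiv:2204.06141 — 5 statements merged into one kernel-verified Lean document; each statement's English description precedes it below -/
import Mathlib

section
/- Define the piling Π(u) ∈ (A*)^D of a finite word u over the alphabet ⊔_{i=1}^{D}(G_i ∖ {e}) by the inductive rules for appending a letter. Then: (a) if s_i ∈ G_i ∖ {e} and s_j ∈ G_j ∖ {e} with v_i and v_j adjacent in Γ, then Π(u s_i s_j) = Π(u s_j s_i) for every word u; (b) Π(u s_i s_i^{-1}) = Π(u) for every word u and every s_i ∈ G_i ∖ {e}. Consequently, any two finite words over ⊔_i (G_i ∖ {e}) representing the same element of G(Γ) have equal pilings, so Π induces a well-defined map Π : G(Γ) → (A*)^D. -/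
open MeasureTheory ProbabilityTheory
open scoped Classical ENNReal

namespace GraphProductDrift

variable {D : ℕ}

/-- The commutation relators of a graph product. -/
def Rels (Γ : SimpleGraph (Fin D)) (G : Fin D → Type*) [∀ i, Group (G i)] :
    Set (Monoid.CoprodI G) :=
  { x | ∃ (i j : Fin D) (g : G i) (h : G j), Γ.Adj i j ∧
      x = Monoid.CoprodI.of g * Monoid.CoprodI.of h *
        (Monoid.CoprodI.of g)⁻¹ * (Monoid.CoprodI.of h)⁻¹ }

/-- The graph product of the family of groups `G` over the graph `Γ`. -/
abbrev GP (Γ : SimpleGraph (Fin D)) (G : Fin D → Type*) [∀ i, Group (G i)] : Type _ :=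
  Monoid.CoprodI G ⧸ Subgroup.normalClosure (Rels Γ G)

/-- The canonical map from a vertex group to the graph product. -/
def of (Γ : SimpleGraph (Fin D)) {G : Fin D → Type*} [∀ i, Group (G i)] (i : Fin D) :
    G i →* GP Γ G :=
  (QuotientGroup.mk' _).comp Monoid.CoprodI.of

/-- The image in the graph product of a word in the alphabet `⊔ᵢ Gᵢ`. -/
def prodOfWord (Γ : SimpleGraph (Fin D)) {G : Fin D → Type*} [∀ i, Group (G i)]
    (u : List (Σ i, G i)) : GP Γ G :=
  (u.map fun l => of Γ l.1 l.2).prod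

/-- A piling: a list of `D` strings, the `i`-th string over the alphabet
`{0} ⊔ (Gᵢ ∖ {e})`, where `none` plays the role of `0`. -/
abbrev PilingT (G : Fin D → Type*) : Type _ := ∀ i : Fin D, List (Option (G i))

/-- Replace the `i`-th string of a piling. -/
def setAt {G : Fin D → Type*} (P : PilingT G) (i : Fin D) (l : List (Option (G i))) :
    PilingT G :=
  fun j => if h : j = i then h ▸ l else P j

/-- Append a single letter `g ∈ Gᵢ` to a piling, following Crisp–Godelle–Wiest. -/
noncomputable def appendLetter (Γ : SimpleGraph (Fin D)) {G : Fin D → Type*} [∀ i, Group (G i)]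
    (P : PilingT G) (i : Fin D) (g : G i) : PilingT G :=
  match (P i).getLast? with
  | some (some g') =>
      if g' * g = 1 then
        fun j => if j = i ∨ (j ≠ i ∧ ¬ Γ.Adj i j) then (P j).dropLast else P j
      else
        setAt P i ((P i).dropLast ++ [some (g' * g)])
  | _ =>
      setAt (fun j => if j ≠ i ∧ ¬ Γ.Adj i j then P j ++ [none] else P j) i
        (P i ++ [some g])

/-- The piling of a word in the alphabet `⊔ᵢ (Gᵢ ∖ {e})`. -/
noncomputable def pilingOfWord (Γ : SimpleGraph (Fin D)) {G : Fin D → Type*} [∀ i, Group (G i)]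
    (u : List (Σ i, G i)) : PilingT G :=
  u.foldl (fun P l => appendLetter Γ P l.1 l.2) (fun _ => [])

/-- The terminal clique of a piling: vertices whose string ends in a
nontrivial group element. -/
def termClique {G : Fin D → Type*} [∀ i, Group (G i)] (P : PilingT G) : Set (Fin D) :=
  { i | ∃ g : G i, g ≠ 1 ∧ (P i).getLast? = some (some g) }

/-- The initial clique of a piling: vertices whose string starts with a
nontrivial group element. -/
def initClique {G : Fin D → Type*} [∀ i, Group (G i)] (P : PilingT G) : Set (Fin D) :=
  { i | ∃ g : G i, g ≠ 1 ∧ (P i).head? = some (some g) }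

/-- The syllable length of an element of a graph product. -/
noncomputable def syl (Γ : SimpleGraph (Fin D)) {G : Fin D → Type*} [∀ i, Group (G i)]
    (g : GP Γ G) : ℕ :=
  sInf { n | ∃ u : List (Σ i, G i), u.length = n ∧
    u.Chain' (fun a b => a.1 ≠ b.1) ∧ prodOfWord Γ u = g }

/-- One piling is a componentwise prefix of another. -/
def PilingPrefix {G : Fin D → Type*} (P Q : PilingT G) : Prop :=
  ∀ i, (P i) <+: (Q i)

/-- The position of the sample path after `k` steps:
`Z_k = s₁w₁ ⋯ s_k w_k`. -/
def Zpath (Γ : SimpleGraph (Fin D)) {G : Fin D → Type*} [∀ i, Group (G i)]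
    (s : ℕ → Σ i, G i) (w : ℕ → GP Γ G) (k : ℕ) : GP Γ G :=
  ((List.range k).map (fun m => of Γ (s m).1 (s m).2 * w m)).prod

/-- `k` is a pivotal time (`0`-indexed: this corresponds to the pivotal time `k+1`
in `1`-indexed notation) of the path `(s₁, w₁, …, sₙ, wₙ)`, with respect to the
piling map `Π`. -/
def IsPivotal (Γ : SimpleGraph (Fin D)) {G : Fin D → Type*} [∀ i, Group (G i)]
    (Pi : GP Γ G → PilingT G) (s : ℕ → Σ i, G i) (w : ℕ → GP Γ G) (n k : ℕ) : Prop :=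
  k < n ∧
  (∀ m, k < m → m ≤ n → PilingPrefix (Pi (Zpath Γ s w k * of Γ (s k).1 (s k).2))
      (Pi (Zpath Γ s w m))) ∧
  (∀ m, k < m → m < n → PilingPrefix (Pi (Zpath Γ s w k * of Γ (s k).1 (s k).2))
      (Pi (Zpath Γ s w m * of Γ (s m).1 (s m).2))) ∧
  (s k).1 ∉ termClique (Pi (Zpath Γ s w k)) ∧
  termClique (Pi (Zpath Γ s w k * of Γ (s k).1 (s k).2)) ∩ initClique (Pi (w k)) = ∅

/-- The number of pivotal times of the path `(s₁, w₁, …, sₙ, wₙ)`. -/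
noncomputable def numPivotal (Γ : SimpleGraph (Fin D)) {G : Fin D → Type*} [∀ i, Group (G i)]
    (Pi : GP Γ G → PilingT G) (s : ℕ → Σ i, G i) (w : ℕ → GP Γ G) (n : ℕ) : ℕ :=
  Set.ncard { k | IsPivotal Γ Pi s w n k }

/-- The maximum size of a clique in `Γ`. -/
noncomputable def cliqueMax (Γ : SimpleGraph (Fin D)) : ℕ :=
  sSup { n | ∃ K : Set (Fin D), Γ.IsClique K ∧ K.ncard = n }

/-- The maximum size of the 1-neighbourhood of a clique in `Γ`. -/
noncomputable def cliqueNbhdMax (Γ : SimpleGraph (Fin D)) : ℕ :=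
  sSup { n | ∃ K : Set (Fin D), Γ.IsClique K ∧
    (K ∪ { v | ∃ u ∈ K, Γ.Adj v u }).ncard = n }

/-- Word length with respect to a set `S` (and the inverses of its elements). -/
noncomputable def wordLength {H : Type*} [Group H] (S : Set H) (g : H) : ℕ :=
  sInf { n | ∃ u : List H, u.length = n ∧ (∀ x ∈ u, x ∈ S ∨ x⁻¹ ∈ S) ∧ u.prod = g }

section Aux
set_option linter.unusedSectionVars false
variable {D : ℕ} (Γ : SimpleGraph (Fin D)) {G : Fin D → Type*} [∀ i, Group (G i)]

lemma setAt_self (P : PilingT G) (i : Fin D) (l : List (Option (G i))) : setAt P i l i = l := by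
  simp [setAt]

lemma setAt_ne (P : PilingT G) {i j : Fin D} (l : List (Option (G i))) (h : j ≠ i) :
    setAt P i l j = P j := by
  simp [setAt, h]

lemma app_fresh (P : PilingT G) {i : Fin D} (g : G i)
    (h : ∀ a : G i, (P i).getLast? ≠ some (some a)) :
    appendLetter Γ P i g =
      setAt (fun j => if j ≠ i ∧ ¬ Γ.Adj i j then P j ++ [none] else P j) i (P i ++ [some g]) := by
  unfold appendLetter
  split
  · next g' heq => exact absurd heq (h _)
  · rfl

lemma app_merge (P : PilingT G) {i : Fin D} (g g' : G i)
    (hL : (P i).getLast? = some (some g')) (hne : g' * g ≠ 1) :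
    appendLetter Γ P i g = setAt P i ((P i).dropLast ++ [some (g' * g)]) := by
  unfold appendLetter
  split
  · next a heq =>
    rw [hL] at heq
    obtain rfl : a = g' := by injection (heq.symm) with h1; injection h1
    rw [if_neg hne]
  · next hno => exact absurd hL (hno g')

lemma app_del (P : PilingT G) {i : Fin D} (g g' : G i)
    (hL : (P i).getLast? = some (some g')) (he : g' * g = 1) :
    appendLetter Γ P i g =
      fun j => if j = i ∨ (j ≠ i ∧ ¬ Γ.Adj i j) then (P j).dropLast else P j := by
  unfold appendLetter
  split
  · next a heq =>
    rw [hL] at heq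
    obtain rfl : a = g' := by injection (heq.symm) with h1; injection h1
    rw [if_pos he]
  · next hno => exact absurd hL (hno g')

lemma pil_append (u v : List (Σ i, G i)) :
    pilingOfWord Γ (u ++ v) =
      v.foldl (fun P l => appendLetter Γ P l.1 l.2) (pilingOfWord Γ u) := by
  simp [pilingOfWord, List.foldl_append]

lemma pil_snoc (u : List (Σ i, G i)) (i : Fin D) (g : G i) :
    pilingOfWord Γ (u ++ [⟨i, g⟩]) = appendLetter Γ (pilingOfWord Γ u) i g := by
  simp [pilingOfWord, List.foldl_append]

end Aux

section Aux2
set_option linter.unusedSectionVars false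
variable {D : ℕ} (Γ : SimpleGraph (Fin D)) {G : Fin D → Type*} [∀ i, Group (G i)]

lemma fresh_self (P : PilingT G) {i : Fin D} (g : G i)
    (h : ∀ a : G i, (P i).getLast? ≠ some (some a)) :
    appendLetter Γ P i g i = P i ++ [some g] := by
  rw [app_fresh Γ P g h, setAt_self]

lemma fresh_nonadj (P : PilingT G) {i k : Fin D} (g : G i)
    (h : ∀ a : G i, (P i).getLast? ≠ some (some a)) (hk : k ≠ i) (hna : ¬ Γ.Adj i k) :
    appendLetter Γ P i g k = P k ++ [none] := by
  rw [app_fresh Γ P g h, setAt_ne _ _ hk, if_pos ⟨hk, hna⟩]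

lemma fresh_adj (P : PilingT G) {i k : Fin D} (g : G i)
    (h : ∀ a : G i, (P i).getLast? ≠ some (some a)) (hk : k ≠ i) (ha : Γ.Adj i k) :
    appendLetter Γ P i g k = P k := by
  rw [app_fresh Γ P g h, setAt_ne _ _ hk, if_neg (by tauto)]

/-- Appending a letter at `i` does not change strings at vertices adjacent to `i`. -/
lemma app_adj (P : PilingT G) {i k : Fin D} (g : G i) (hk : k ≠ i) (ha : Γ.Adj i k) :
    appendLetter Γ P i g k = P k := by
  rcases hL : (P i).getLast? with _ | (_ | a)
  · exact fresh_adj Γ P g (by rw [hL]; simp) hk ha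
  · exact fresh_adj Γ P g (by rw [hL]; simp) hk ha
  · by_cases he : a * g = 1
    · rw [app_del Γ P g a hL he]; exact if_neg (by tauto)
    · rw [app_merge Γ P g a hL he, setAt_ne _ _ hk]

/-- Normal words: every letter is nontrivial and is appended "freshly". -/
inductive NW : List (Σ i, G i) → Prop
  | nil : NW []
  | snoc (u : List (Σ i, G i)) (i : Fin D) (g : G i) (hu : NW u) (hg : g ≠ 1)
      (hfresh : ∀ a : G i, ((pilingOfWord Γ u) i).getLast? ≠ some (some a)) :
      NW (u ++ [⟨i, g⟩])

lemma fresh_swap (P : PilingT G) {i j : Fin D} (g : G i) (h : G j) (hij : i ≠ j)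
    (hadj : Γ.Adj i j)
    (hi : ∀ a : G i, (P i).getLast? ≠ some (some a))
    (hj : ∀ a : G j, (P j).getLast? ≠ some (some a)) :
    appendLetter Γ (appendLetter Γ P i g) j h = appendLetter Γ (appendLetter Γ P j h) i g := by
  have hQ1j : appendLetter Γ P i g j = P j := app_adj Γ P g hij.symm hadj
  have hQ2i : appendLetter Γ P j h i = P i := app_adj Γ P h hij hadj.symm
  have hj' : ∀ a : G j, ((appendLetter Γ P i g) j).getLast? ≠ some (some a) := by
    rw [hQ1j]; exact hj
  have hi' : ∀ a : G i, ((appendLetter Γ P j h) i).getLast? ≠ some (some a) := by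
    rw [hQ2i]; exact hi
  funext k
  by_cases hkj : k = j
  · subst hkj
    rw [fresh_self Γ _ h hj', hQ1j, app_adj Γ _ g hij.symm hadj, fresh_self Γ P h hj]
  · by_cases hki : k = i
    · subst hki
      rw [app_adj Γ _ h hij hadj.symm, fresh_self Γ P g hi,
        fresh_self Γ _ g hi', hQ2i]
    · by_cases haik : Γ.Adj i k
      · by_cases hajk : Γ.Adj j k
        · rw [fresh_adj Γ _ h hj' hkj hajk, fresh_adj Γ P g hi hki haik,
            fresh_adj Γ _ g hi' hki haik, fresh_adj Γ P h hj hkj hajk]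
        · rw [fresh_nonadj Γ _ h hj' hkj hajk, fresh_adj Γ P g hi hki haik,
            fresh_adj Γ _ g hi' hki haik, fresh_nonadj Γ P h hj hkj hajk]
      · by_cases hajk : Γ.Adj j k
        · rw [fresh_adj Γ _ h hj' hkj hajk, fresh_nonadj Γ P g hi hki haik,
            fresh_nonadj Γ _ g hi' hki haik, fresh_adj Γ P h hj hkj hajk]
        · rw [fresh_nonadj Γ _ h hj' hkj hajk, fresh_nonadj Γ P g hi hki haik,
            fresh_nonadj Γ _ g hi' hki haik, fresh_nonadj Γ P h hj hkj hajk]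

/-- Key lemma: if the `i`-th string of the piling of a normal word ends in `some g'`,
then the piling equals that of a normal word ending with the letter `⟨i, g'⟩`. -/
theorem nw_top {u : List (Σ i, G i)} (hu : NW Γ u) :
    ∀ (i : Fin D) (g' : G i), ((pilingOfWord Γ u) i).getLast? = some (some g') →
      ∃ v : List (Σ i, G i), NW Γ v ∧ g' ≠ 1 ∧
        (∀ a : G i, ((pilingOfWord Γ v) i).getLast? ≠ some (some a)) ∧
        pilingOfWord Γ u = pilingOfWord Γ (v ++ [⟨i, g'⟩]) := by
  induction hu with
  | nil =>
    intro i g' hL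
    simp [pilingOfWord] at hL
  | snoc w j h hw hh hfresh IH =>
    intro i g' hL
    rw [pil_snoc] at hL
    by_cases hij : i = j
    · subst hij
      rw [fresh_self Γ _ h hfresh, List.getLast?_concat] at hL
      obtain rfl : g' = h := by
        injection hL with h1; injection h1 with h2; exact h2.symm
      exact ⟨w, hw, hh, hfresh, rfl⟩
    · by_cases hadj : Γ.Adj j i
      · rw [app_adj Γ _ h hij hadj] at hL
        obtain ⟨v, hv, hg', hfrv, heq⟩ := IH i g' hL
        have hvj : pilingOfWord Γ (v ++ [⟨i, g'⟩]) j = pilingOfWord Γ v j := by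
          rw [pil_snoc]
          exact app_adj Γ _ g' (Ne.symm hij) hadj.symm
        have hfrvj : ∀ a : G j, ((pilingOfWord Γ v) j).getLast? ≠ some (some a) := by
          intro a
          rw [← hvj, ← heq]; exact hfresh a
        refine ⟨v ++ [⟨j, h⟩], NW.snoc v j h hv hh hfrvj, hg', ?_, ?_⟩
        · rw [pil_snoc, app_adj Γ _ h hij hadj]
          exact hfrv
        · rw [pil_snoc, heq, pil_snoc, pil_snoc, pil_snoc]
          exact fresh_swap Γ _ g' h hij hadj.symm hfrv hfrvj
      · rw [fresh_nonadj Γ _ h hfresh hij (fun hcon => hadj hcon), List.getLast?_concat] at hL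
        simp at hL

end Aux2

section Aux3
set_option linter.unusedSectionVars false
variable {D : ℕ} (Γ : SimpleGraph (Fin D)) {G : Fin D → Type*} [∀ i, Group (G i)]

lemma merge_self (P : PilingT G) {i : Fin D} (g g' : G i)
    (hL : (P i).getLast? = some (some g')) (hne : g' * g ≠ 1) :
    appendLetter Γ P i g i = (P i).dropLast ++ [some (g' * g)] := by
  rw [app_merge Γ P g g' hL hne, setAt_self]

lemma merge_ne (P : PilingT G) {i k : Fin D} (g g' : G i)
    (hL : (P i).getLast? = some (some g')) (hne : g' * g ≠ 1) (hk : k ≠ i) :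
    appendLetter Γ P i g k = P k := by
  rw [app_merge Γ P g g' hL hne, setAt_ne _ _ hk]

lemma del_self (P : PilingT G) {i : Fin D} (g g' : G i)
    (hL : (P i).getLast? = some (some g')) (he : g' * g = 1) :
    appendLetter Γ P i g i = (P i).dropLast := by
  rw [app_del Γ P g g' hL he]; exact if_pos (Or.inl rfl)

lemma del_nonadj (P : PilingT G) {i k : Fin D} (g g' : G i)
    (hL : (P i).getLast? = some (some g')) (he : g' * g = 1) (hk : k ≠ i)
    (hna : ¬ Γ.Adj i k) :
    appendLetter Γ P i g k = (P k).dropLast := by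
  rw [app_del Γ P g g' hL he]; exact if_pos (Or.inr ⟨hk, hna⟩)

/-- Appending `g'` freshly and then a letter `g` with `g' * g = 1` restores the piling. -/
lemma fresh_cancel (P : PilingT G) {i : Fin D} (g g' : G i)
    (hfr : ∀ a : G i, (P i).getLast? ≠ some (some a)) (he : g' * g = 1) :
    appendLetter Γ (appendLetter Γ P i g') i g = P := by
  have hQ : (appendLetter Γ P i g' i).getLast? = some (some g') := by
    rw [fresh_self Γ P g' hfr, List.getLast?_concat]
  funext k
  by_cases hk : k = i
  · subst hk
    rw [del_self Γ _ g g' hQ he, fresh_self Γ P g' hfr, List.dropLast_concat]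
  · by_cases ha : Γ.Adj i k
    · rw [app_adj Γ _ g hk ha, fresh_adj Γ P g' hfr hk ha]
    · rw [del_nonadj Γ _ g g' hQ he hk ha, fresh_nonadj Γ P g' hfr hk ha,
        List.dropLast_concat]

/-- Appending `g'` freshly and then merging `g` is a fresh append of `g' * g`. -/
lemma fresh_merge (P : PilingT G) {i : Fin D} (g g' : G i)
    (hfr : ∀ a : G i, (P i).getLast? ≠ some (some a)) (hne : g' * g ≠ 1) :
    appendLetter Γ (appendLetter Γ P i g') i g = appendLetter Γ P i (g' * g) := by
  have hQ : (appendLetter Γ P i g' i).getLast? = some (some g') := by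
    rw [fresh_self Γ P g' hfr, List.getLast?_concat]
  funext k
  by_cases hk : k = i
  · subst hk
    rw [merge_self Γ _ g g' hQ hne, fresh_self Γ P g' hfr, List.dropLast_concat,
      fresh_self Γ P (g' * g) hfr]
  · by_cases ha : Γ.Adj i k
    · rw [merge_ne Γ _ g g' hQ hne hk, fresh_adj Γ P g' hfr hk ha,
        fresh_adj Γ P (g' * g) hfr hk ha]
    · rw [merge_ne Γ _ g g' hQ hne hk, fresh_nonadj Γ P g' hfr hk ha,
        fresh_nonadj Γ P (g' * g) hfr hk ha]

/-- A piling is normal if it is the piling of a normal word. -/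
def NormalP (P : PilingT G) : Prop := ∃ v : List (Σ i, G i), NW Γ v ∧ P = pilingOfWord Γ v

/-- If the `j`-th string of a normal piling ends in a group element, then every string
nonadjacent to `j` ends in `none`. -/
lemma ends_none {P : PilingT G} (hP : NormalP Γ P) {j : Fin D} {b : G j}
    (hL : (P j).getLast? = some (some b)) {k : Fin D} (hk : k ≠ j) (hna : ¬ Γ.Adj j k) :
    ∃ l, P k = l ++ [none] := by
  obtain ⟨v, hv, rfl⟩ := hP
  obtain ⟨w, hw, hb, hfrw, heq⟩ := nw_top Γ hv j b hL
  refine ⟨pilingOfWord Γ w k, ?_⟩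
  rw [heq, pil_snoc, fresh_nonadj Γ _ b hfrw hk hna]

/-- Appending a nontrivial letter preserves normality. -/
lemma normal_append {P : PilingT G} (hP : NormalP Γ P) (i : Fin D) (g : G i) (hg : g ≠ 1) :
    NormalP Γ (appendLetter Γ P i g) := by
  obtain ⟨v, hv, rfl⟩ := hP
  by_cases hFi : ∀ a : G i, ((pilingOfWord Γ v) i).getLast? ≠ some (some a)
  · exact ⟨v ++ [⟨i, g⟩], NW.snoc v i g hv hg hFi, (pil_snoc Γ v i g).symm⟩
  · push_neg at hFi
    obtain ⟨a, hL⟩ := hFi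
    obtain ⟨w, hw, ha, hfrw, heq⟩ := nw_top Γ hv i a hL
    by_cases he : a * g = 1
    · refine ⟨w, hw, ?_⟩
      rw [heq, pil_snoc, fresh_cancel Γ _ g a hfrw he]
    · refine ⟨w ++ [⟨i, a * g⟩], NW.snoc w i (a * g) hw he hfrw, ?_⟩
      rw [heq, pil_snoc, fresh_merge Γ _ g a hfrw he, pil_snoc]

/-- The piling of any word with nontrivial letters is normal. -/
lemma pil_normalizable : ∀ u : List (Σ i, G i), (∀ l ∈ u, l.2 ≠ 1) →
    NormalP Γ (pilingOfWord Γ u) := by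
  intro u
  induction u using List.reverseRecOn with
  | nil => intro _; exact ⟨[], NW.nil, rfl⟩
  | append_singleton u l IH =>
    intro h
    rcases l with ⟨i, g⟩
    rw [pil_snoc]
    exact normal_append Γ (IH fun x hx => h x (List.mem_append_left _ hx)) i g
      (h ⟨i, g⟩ (List.mem_append_right _ (List.mem_singleton_self _)))

/-- `appendLetter` at `j` only depends on and affects strings other than `i`, if `j ≠ i`. -/
lemma app_congr {i : Fin D} (P Q : PilingT G) {j : Fin D} (g : G j) (hj : j ≠ i)
    (h : ∀ k, k ≠ i → P k = Q k) :
    ∀ k, k ≠ i → appendLetter Γ P j g k = appendLetter Γ Q j g k := by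
  have hPQj : P j = Q j := h j hj
  intro k hk
  by_cases hFj : ∀ a : G j, (P j).getLast? ≠ some (some a)
  · have hFj' : ∀ a : G j, (Q j).getLast? ≠ some (some a) := by rw [← hPQj]; exact hFj
    by_cases hkj : k = j
    · subst hkj; rw [fresh_self Γ P g hFj, fresh_self Γ Q g hFj', hPQj]
    · by_cases ha : Γ.Adj j k
      · rw [fresh_adj Γ P g hFj hkj ha, fresh_adj Γ Q g hFj' hkj ha, h k hk]
      · rw [fresh_nonadj Γ P g hFj hkj ha, fresh_nonadj Γ Q g hFj' hkj ha, h k hk]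
  · push_neg at hFj
    obtain ⟨a, hL⟩ := hFj
    have hL' : (Q j).getLast? = some (some a) := by rw [← hPQj]; exact hL
    by_cases he : a * g = 1
    · simp only [app_del Γ P g a hL he, app_del Γ Q g a hL' he]
      by_cases hc : k = j ∨ (k ≠ j ∧ ¬ Γ.Adj j k)
      · rw [if_pos hc, if_pos hc]
        rcases hc with rfl | ⟨h1, _⟩
        · rw [hPQj]
        · rw [h k hk]
      · rw [if_neg hc, if_neg hc, h k hk]
    · by_cases hkj : k = j
      · subst hkj
        rw [merge_self Γ P g a hL he, merge_self Γ Q g a hL' he, hPQj]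
      · rw [merge_ne Γ P g a hL he hkj, merge_ne Γ Q g a hL' he hkj, h k hk]

/-- A merge at `i` commutes with any append at an adjacent vertex `j`. -/
lemma merge_comm (P : PilingT G) {i j : Fin D} (si : G i) (sj : G j) (a : G i)
    (hadj : Γ.Adj i j) (hL : (P i).getLast? = some (some a)) (hne : a * si ≠ 1) :
    appendLetter Γ (appendLetter Γ P i si) j sj =
      appendLetter Γ (appendLetter Γ P j sj) i si := by
  have hij : i ≠ j := hadj.ne
  have hQ2i : appendLetter Γ P j sj i = P i := app_adj Γ P sj hij hadj.symm
  have hL2 : ((appendLetter Γ P j sj) i).getLast? = some (some a) := by rw [hQ2i]; exact hL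
  funext k
  by_cases hk : k = i
  · subst hk
    rw [app_adj Γ _ sj hij hadj.symm, merge_self Γ P si a hL hne,
      merge_self Γ _ si a hL2 hne, hQ2i]
  · rw [merge_ne Γ _ si a hL2 hne hk]
    rw [app_congr Γ (appendLetter Γ P i si) P sj (Ne.symm hij)
      (fun m hm => merge_ne Γ P si a hL hne hm) k hk]

/-- Two deletions at adjacent vertices commute. -/
lemma del_del (P : PilingT G) {i j : Fin D} (si : G i) (sj : G j) (a : G i) (b : G j)
    (hadj : Γ.Adj i j) (hLi : (P i).getLast? = some (some a)) (hei : a * si = 1)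
    (hLj : (P j).getLast? = some (some b)) (hej : b * sj = 1) :
    appendLetter Γ (appendLetter Γ P i si) j sj =
      appendLetter Γ (appendLetter Γ P j sj) i si := by
  have hij : i ≠ j := hadj.ne
  have h1i : ((appendLetter Γ P j sj) i).getLast? = some (some a) := by
    rw [app_adj Γ P sj hij hadj.symm]; exact hLi
  have h1j : ((appendLetter Γ P i si) j).getLast? = some (some b) := by
    rw [app_adj Γ P si hij.symm hadj]; exact hLj
  funext k
  rw [app_del Γ _ sj b h1j hej, app_del Γ _ si a h1i hei]
  simp only [app_del Γ P si a hLi hei, app_del Γ P sj b hLj hej]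
  by_cases hcj : k = j ∨ (k ≠ j ∧ ¬ Γ.Adj j k) <;>
    by_cases hci : k = i ∨ (k ≠ i ∧ ¬ Γ.Adj i k) <;>
      simp [hcj, hci]

/-- A fresh append at `i` commutes with a deletion at an adjacent vertex `j`,
for normal pilings. -/
lemma fresh_del (P : PilingT G) (hP : NormalP Γ P) {i j : Fin D} (si : G i) (sj : G j)
    (b : G j) (hadj : Γ.Adj i j)
    (hFi : ∀ a : G i, (P i).getLast? ≠ some (some a))
    (hLj : (P j).getLast? = some (some b)) (hej : b * sj = 1) :
    appendLetter Γ (appendLetter Γ P i si) j sj =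
      appendLetter Γ (appendLetter Γ P j sj) i si := by
  have hij : i ≠ j := hadj.ne
  have h1j : ((appendLetter Γ P i si) j).getLast? = some (some b) := by
    rw [app_adj Γ P si hij.symm hadj]; exact hLj
  have hF2 : ∀ a : G i, ((appendLetter Γ P j sj) i).getLast? ≠ some (some a) := by
    rw [app_adj Γ P sj hij hadj.symm]; exact hFi
  have hQ2i : appendLetter Γ P j sj i = P i := app_adj Γ P sj hij hadj.symm
  funext k
  simp only [app_del Γ _ sj b h1j hej]
  by_cases hk : k = i
  · subst hk
    rw [if_neg (fun h => h.elim (fun he => hij he) (fun hc => hc.2 hadj.symm))]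
    rw [fresh_self Γ P si hFi, fresh_self Γ _ si hF2, hQ2i]
  · by_cases hkj : k = j
    · subst hkj
      rw [if_pos (Or.inl rfl), app_adj Γ P si hij.symm hadj,
        fresh_adj Γ _ si hF2 (Ne.symm hij) hadj, del_self Γ P sj b hLj hej]
    · by_cases hcj : Γ.Adj j k
      · rw [if_neg (fun h => h.elim (fun he => hkj he) (fun hc => hc.2 hcj))]
        by_cases hai : Γ.Adj i k
        · rw [fresh_adj Γ P si hFi hk hai, fresh_adj Γ _ si hF2 hk hai,
            app_adj Γ P sj hkj hcj]
        · rw [fresh_nonadj Γ P si hFi hk hai, fresh_nonadj Γ _ si hF2 hk hai,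
            app_adj Γ P sj hkj hcj]
      · rw [if_pos (Or.inr ⟨hkj, hcj⟩)]
        by_cases hai : Γ.Adj i k
        · rw [fresh_adj Γ P si hFi hk hai, fresh_adj Γ _ si hF2 hk hai,
            del_nonadj Γ P sj b hLj hej hkj hcj]
        · obtain ⟨l, hl⟩ := ends_none Γ hP hLj hkj hcj
          rw [fresh_nonadj Γ P si hFi hk hai, fresh_nonadj Γ _ si hF2 hk hai,
            del_nonadj Γ P sj b hLj hej hkj hcj, hl, List.dropLast_concat,
            List.dropLast_concat]

end Aux3

section Aux4
set_option linter.unusedSectionVars false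

variable {D : ℕ} (Γ : SimpleGraph (Fin D)) {G : Fin D → Type*} [∀ i, Group (G i)]

lemma pair_split {α : Type*} (u : List α) (x y : α) :
    u ++ [x, y] = (u ++ [x]) ++ [y] := by
  simp

/-- Appends at adjacent vertices commute, for normal pilings. -/
lemma swap_pair {P : PilingT G} (hP : NormalP Γ P) {i j : Fin D} (si : G i) (sj : G j)
    (hadj : Γ.Adj i j) :
    appendLetter Γ (appendLetter Γ P i si) j sj =
      appendLetter Γ (appendLetter Γ P j sj) i si := by
  have hij : i ≠ j := hadj.ne
  by_cases hFi : ∀ a : G i, (P i).getLast? ≠ some (some a)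
  · by_cases hFj : ∀ b : G j, (P j).getLast? ≠ some (some b)
    · exact fresh_swap Γ P si sj hij hadj hFi hFj
    · push_neg at hFj
      obtain ⟨b, hLj⟩ := hFj
      by_cases hej : b * sj = 1
      · exact fresh_del Γ P hP si sj b hadj hFi hLj hej
      · exact (merge_comm Γ P sj si b hadj.symm hLj hej).symm
  · push_neg at hFi
    obtain ⟨a, hLi⟩ := hFi
    by_cases hei : a * si = 1
    · by_cases hFj : ∀ b : G j, (P j).getLast? ≠ some (some b)
      · exact (fresh_del Γ P hP sj si a hadj.symm hFj hLi hei).symm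
      · push_neg at hFj
        obtain ⟨b, hLj⟩ := hFj
        by_cases hej : b * sj = 1
        · exact del_del Γ P si sj a b hadj hLi hei hLj hej
        · exact (merge_comm Γ P sj si b hadj.symm hLj hej).symm
    · exact merge_comm Γ P si sj a hadj hLi hei

/-- Appending `g` and then `g⁻¹` leaves a normal piling unchanged. -/
lemma cancel_pair {P : PilingT G} (hP : NormalP Γ P) (i : Fin D) (g : G i) :
    appendLetter Γ (appendLetter Γ P i g) i g⁻¹ = P := by
  by_cases hFi : ∀ a : G i, (P i).getLast? ≠ some (some a)
  · exact fresh_cancel Γ P g⁻¹ g hFi (mul_inv_cancel g)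
  · push_neg at hFi
    obtain ⟨a, hLi⟩ := hFi
    obtain ⟨v, hv, rfl⟩ := hP
    obtain ⟨w, hw, ha, hfrw, heq⟩ := nw_top Γ hv i a hLi
    rw [heq, pil_snoc]
    by_cases he : a * g = 1
    · rw [fresh_cancel Γ _ g a hfrw he,
        show (a : G i) = g⁻¹ from eq_inv_of_mul_eq_one_left he]
    · have hne2 : (a * g) * g⁻¹ ≠ 1 := by rwa [mul_inv_cancel_right]
      rw [fresh_merge Γ _ g a hfrw he, fresh_merge Γ _ g⁻¹ (a * g) hfrw hne2,
        mul_inv_cancel_right]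

/-- Two consecutive letters at the same vertex merge. -/
lemma merge_pair {P : PilingT G} (hP : NormalP Γ P) (i : Fin D) (g h : G i)
    (hh : h ≠ 1) (hgh : g * h ≠ 1) :
    appendLetter Γ (appendLetter Γ P i g) i h = appendLetter Γ P i (g * h) := by
  by_cases hFi : ∀ a : G i, (P i).getLast? ≠ some (some a)
  · exact fresh_merge Γ P h g hFi hgh
  · push_neg at hFi
    obtain ⟨a, hLi⟩ := hFi
    obtain ⟨v, hv, rfl⟩ := hP
    obtain ⟨w, hw, ha, hfrw, heq⟩ := nw_top Γ hv i a hLi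
    rw [heq, pil_snoc]
    by_cases he : a * g = 1
    · have hval : a * (g * h) = h := by rw [← mul_assoc, he, one_mul]
      have hne : a * (g * h) ≠ 1 := by rw [hval]; exact hh
      rw [fresh_cancel Γ _ g a hfrw he, fresh_merge Γ _ (g * h) a hfrw hne, hval]
    · rw [fresh_merge Γ _ g a hfrw he]
      by_cases he2 : a * g * h = 1
      · have he2' : a * (g * h) = 1 := by rw [← mul_assoc]; exact he2
        rw [fresh_cancel Γ _ h (a * g) hfrw he2, fresh_cancel Γ _ (g * h) a hfrw he2']
      · have he2' : a * (g * h) ≠ 1 := by rw [← mul_assoc]; exact he2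
        rw [fresh_merge Γ _ h (a * g) hfrw he2, fresh_merge Γ _ (g * h) a hfrw he2',
          mul_assoc]

/-- Statement (a): swapping adjacent letters at adjacent vertices. -/
theorem pil_swap (u : List (Σ i, G i)) (hu : ∀ l ∈ u, l.2 ≠ 1) {i j : Fin D}
    (si : G i) (sj : G j) (hadj : Γ.Adj i j) :
    pilingOfWord Γ (u ++ [⟨i, si⟩, ⟨j, sj⟩]) = pilingOfWord Γ (u ++ [⟨j, sj⟩, ⟨i, si⟩]) := by
  rw [pair_split, pair_split, pil_snoc, pil_snoc, pil_snoc, pil_snoc]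
  exact swap_pair Γ (pil_normalizable Γ u hu) si sj hadj

/-- Statement (b): free cancellation. -/
theorem pil_cancel (u : List (Σ i, G i)) (hu : ∀ l ∈ u, l.2 ≠ 1) (i : Fin D) (g : G i) :
    pilingOfWord Γ (u ++ [⟨i, g⟩, ⟨i, g⁻¹⟩]) = pilingOfWord Γ u := by
  rw [pair_split, pil_snoc, pil_snoc]
  exact cancel_pair Γ (pil_normalizable Γ u hu) i g

/-- Merging consecutive letters at the same vertex. -/
theorem pil_merge (u : List (Σ i, G i)) (hu : ∀ l ∈ u, l.2 ≠ 1) (i : Fin D) (g h : G i)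
    (hh : h ≠ 1) (hgh : g * h ≠ 1) :
    pilingOfWord Γ (u ++ [⟨i, g⟩, ⟨i, h⟩]) = pilingOfWord Γ (u ++ [⟨i, g * h⟩]) := by
  rw [pair_split, pil_snoc, pil_snoc, pil_snoc]
  exact merge_pair Γ (pil_normalizable Γ u hu) i g h hh hgh

end Aux4

section Aux5
set_option linter.unusedSectionVars false
set_option maxHeartbeats 1000000
variable {D : ℕ} (Γ : SimpleGraph (Fin D)) {G : Fin D → Type*} [∀ i, Group (G i)]

/-- The image of a word in the free product. -/
def cprod (u : List (Σ i, G i)) : Monoid.CoprodI G :=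
  (u.map fun l => Monoid.CoprodI.of l.2).prod

lemma cprod_append (u v : List (Σ i, G i)) : cprod (u ++ v) = cprod u * cprod v := by
  simp [cprod]

lemma cprod_snoc (u : List (Σ i, G i)) (i : Fin D) (g : G i) :
    cprod (u ++ [⟨i, g⟩]) = cprod u * Monoid.CoprodI.of g := by
  simp [cprod]

lemma pil_congr_append {u v : List (Σ i, G i)} (h : pilingOfWord Γ u = pilingOfWord Γ v)
    (y : List (Σ i, G i)) :
    pilingOfWord Γ (u ++ y) = pilingOfWord Γ (v ++ y) := by
  rw [pil_append, pil_append, h]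

/-- In a non-reduced word there are two adjacent letters at the same vertex. -/
lemma find_bad : ∀ u : List (Σ i, G i), ¬ u.Chain' (fun a b => a.1 ≠ b.1) →
    ∃ (x : List (Σ i, G i)) (i : Fin D) (g h : G i) (y : List (Σ i, G i)),
      u = x ++ [⟨i, g⟩, ⟨i, h⟩] ++ y := by
  intro u
  induction u with
  | nil => intro hc; exact absurd List.isChain_nil hc
  | cons a t IHt =>
    intro hc
    cases t with
    | nil => exact absurd (List.isChain_singleton a) hc
    | cons b t2 =>
      rw [List.Chain', List.isChain_cons_cons] at hc
      rcases a with ⟨ia, ga⟩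
      rcases b with ⟨ib, gb⟩
      by_cases hR : ia ≠ ib
      · have hc2 : ¬ List.Chain' (fun a b => a.1 ≠ b.1) (⟨ib, gb⟩ :: t2) := by
          intro hcc; exact hc ⟨hR, hcc⟩
        obtain ⟨x, i, g, h, y, heq⟩ := IHt hc2
        exact ⟨⟨ia, ga⟩ :: x, i, g, h, y, by rw [heq]; rfl⟩
      · rw [not_not] at hR
        subst hR
        exact ⟨[], ia, ga, gb, t2, rfl⟩

/-- Any word with nontrivial letters has the same piling and free-product image as
some reduced word. -/
theorem exists_reduced : ∀ (n : ℕ) (u : List (Σ i, G i)), u.length ≤ n →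
    (∀ l ∈ u, l.2 ≠ 1) →
    ∃ w : Monoid.CoprodI.Word G,
      pilingOfWord Γ u = pilingOfWord Γ w.toList ∧ w.prod = cprod u := by
  intro n
  induction n with
  | zero =>
    intro u hlen _
    obtain rfl : u = [] := List.length_eq_zero_iff.mp (Nat.le_zero.mp hlen)
    exact ⟨Monoid.CoprodI.Word.empty, rfl, rfl⟩
  | succ n IH =>
    intro u hlen hu
    by_cases hc : u.Chain' (fun a b => a.1 ≠ b.1)
    · exact ⟨⟨u, hu, hc⟩, rfl, rfl⟩
    · obtain ⟨x, i, g, h, y, hdecomp⟩ := find_bad u hc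
      have hxmem : ∀ l ∈ x, l.2 ≠ 1 := by
        intro l hl; exact hu l (by rw [hdecomp]; simp [hl])
      have hymem : ∀ l ∈ y, l.2 ≠ 1 := by
        intro l hl; exact hu l (by rw [hdecomp]; simp [hl])
      have hg : g ≠ 1 := hu ⟨i, g⟩ (by rw [hdecomp]; simp)
      have hh : h ≠ 1 := hu ⟨i, h⟩ (by rw [hdecomp]; simp)
      have hlenu : u.length = x.length + 2 + y.length := by
        rw [hdecomp]; simp; omega
      by_cases hgh : g * h = 1
      · have hcanc : pilingOfWord Γ (x ++ [⟨i, g⟩, ⟨i, h⟩]) = pilingOfWord Γ x := by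
          rw [show h = g⁻¹ from eq_inv_of_mul_eq_one_right hgh]
          exact pil_cancel Γ x hxmem i g
        have hpx : pilingOfWord Γ u = pilingOfWord Γ (x ++ y) := by
          rw [hdecomp]; exact pil_congr_append Γ hcanc y
        have hcx : cprod u = cprod (x ++ y) := by
          rw [hdecomp, cprod_append, cprod_append, cprod_append]
          have : cprod [(⟨i, g⟩ : Σ i, G i), ⟨i, h⟩] = Monoid.CoprodI.of (g * h) := by
            simp only [cprod, List.map_cons, List.map_nil, List.prod_cons, List.prod_nil,
              mul_one, ← map_mul]
          rw [this, hgh, map_one, mul_one]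
        have hmem : ∀ l ∈ x ++ y, l.2 ≠ 1 := by
          intro l hl
          rcases List.mem_append.mp hl with h1 | h1
          exacts [hxmem l h1, hymem l h1]
        obtain ⟨w, hw1, hw2⟩ := IH (x ++ y) (by simp [List.length_append] at hlenu ⊢; omega) hmem
        exact ⟨w, by rw [hpx]; exact hw1, by rw [hw2, hcx]⟩
      · have hmerge : pilingOfWord Γ (x ++ [⟨i, g⟩, ⟨i, h⟩]) =
            pilingOfWord Γ (x ++ [⟨i, g * h⟩]) := pil_merge Γ x hxmem i g h hh hgh
        have hpx : pilingOfWord Γ u = pilingOfWord Γ ((x ++ [⟨i, g * h⟩]) ++ y) := by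
          rw [hdecomp]; exact pil_congr_append Γ hmerge y
        have hcx : cprod u = cprod ((x ++ [⟨i, g * h⟩]) ++ y) := by
          rw [hdecomp, cprod_append, cprod_append, cprod_append, cprod_snoc]
          have : cprod [(⟨i, g⟩ : Σ i, G i), ⟨i, h⟩] = Monoid.CoprodI.of (g * h) := by
            simp only [cprod, List.map_cons, List.map_nil, List.prod_cons, List.prod_nil,
              mul_one, ← map_mul]
          rw [this]
        have hmem : ∀ l ∈ (x ++ [⟨i, g * h⟩]) ++ y, l.2 ≠ 1 := by
          intro l hl
          rcases List.mem_append.mp hl with h1 | h1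
          · rcases List.mem_append.mp h1 with h2 | h2
            · exact hxmem l h2
            · rw [List.mem_singleton.mp h2]; exact hgh
          · exact hymem l h1
        obtain ⟨w, hw1, hw2⟩ := IH ((x ++ [⟨i, g * h⟩]) ++ y)
          (by simp [List.length_append] at hlenu ⊢; omega) hmem
        exact ⟨w, by rw [hpx]; exact hw1, by rw [hw2, hcx]⟩

end Aux5

section Aux6
set_option linter.unusedSectionVars false
set_option maxHeartbeats 1000000
variable {D : ℕ} (Γ : SimpleGraph (Fin D)) {G : Fin D → Type*} [∀ i, Group (G i)]

/-- The piling map on the free product, via reduced words. -/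
noncomputable def Fmap (x : Monoid.CoprodI G) : PilingT G :=
  pilingOfWord Γ (Monoid.CoprodI.Word.equiv x).toList

lemma word_prod_injective :
    Function.Injective (Monoid.CoprodI.Word.prod (M := G)) := fun _ _ hw =>
  Monoid.CoprodI.Word.equiv.symm.injective hw

lemma prod_equiv (x : Monoid.CoprodI G) : (Monoid.CoprodI.Word.equiv x).prod = x :=
  Monoid.CoprodI.Word.equiv.symm_apply_apply x

lemma cprod_toList (w : Monoid.CoprodI.Word G) : cprod w.toList = w.prod := rfl

lemma Fmap_cprod (u : List (Σ i, G i)) (hu : ∀ l ∈ u, l.2 ≠ 1) :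
    Fmap Γ (cprod u) = pilingOfWord Γ u := by
  obtain ⟨w, hw1, hw2⟩ := exists_reduced Γ u.length u le_rfl hu
  have hEq : Monoid.CoprodI.Word.equiv (cprod u) = w :=
    word_prod_injective (by rw [prod_equiv, hw2])
  rw [Fmap, hEq, ← hw1]

lemma Fmap_mul_of (x : Monoid.CoprodI G) (i : Fin D) (g : G i) (hg : g ≠ 1) :
    Fmap Γ (x * Monoid.CoprodI.of g) = appendLetter Γ (Fmap Γ x) i g := by
  set w := Monoid.CoprodI.Word.equiv x with hw
  have hx : cprod w.toList = x := by rw [cprod_toList, hw, prod_equiv]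
  have h1 : x * Monoid.CoprodI.of g = cprod (w.toList ++ [⟨i, g⟩]) := by
    rw [cprod_snoc, hx]
  have hmem : ∀ l ∈ w.toList ++ [⟨i, g⟩], l.2 ≠ 1 := by
    intro l hl
    rcases List.mem_append.mp hl with h2 | h2
    · exact w.ne_one l h2
    · rw [List.mem_singleton.mp h2]; exact hg
  have hFx : Fmap Γ x = pilingOfWord Γ w.toList := rfl
  rw [h1, Fmap_cprod Γ _ hmem, pil_snoc, hFx]

lemma Fmap_mul_congr (z : Monoid.CoprodI G) :
    ∀ a b : Monoid.CoprodI G, Fmap Γ a = Fmap Γ b → Fmap Γ (a * z) = Fmap Γ (b * z) := by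
  induction z using Monoid.CoprodI.induction_on with
  | one => intro a b hab; rwa [mul_one, mul_one]
  | of i g =>
    intro a b hab
    by_cases hg : g = 1
    · rwa [hg, map_one, mul_one, mul_one]
    · rw [Fmap_mul_of Γ a i g hg, Fmap_mul_of Γ b i g hg, hab]
  | mul xx yy hx hy =>
    intro a b hab
    rw [← mul_assoc, ← mul_assoc]
    exact hy _ _ (hx _ _ hab)

lemma Fmap_mul_rel (r : Monoid.CoprodI G) (hr : r ∈ Rels Γ G) (x : Monoid.CoprodI G) :
    Fmap Γ (x * r) = Fmap Γ x := by
  obtain ⟨i, j, g, h, hadj, rfl⟩ := hr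
  by_cases hg : g = 1
  · rw [hg, map_one]; simp
  by_cases hh : h = 1
  · rw [hh, map_one]; simp
  set t := (Monoid.CoprodI.Word.equiv x).toList with ht
  have hmemw : ∀ l ∈ t, l.2 ≠ 1 := (Monoid.CoprodI.Word.equiv x).ne_one
  have hmemwh : ∀ l ∈ t ++ [⟨j, h⟩], l.2 ≠ 1 := by
    intro l hl
    rcases List.mem_append.mp hl with h2 | h2
    · exact hmemw l h2
    · rw [List.mem_singleton.mp h2]; exact hh
  have hform : x * (Monoid.CoprodI.of g * Monoid.CoprodI.of h *
      (Monoid.CoprodI.of g)⁻¹ * (Monoid.CoprodI.of h)⁻¹) =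
      (((x * Monoid.CoprodI.of g) * Monoid.CoprodI.of h) * Monoid.CoprodI.of g⁻¹) *
        Monoid.CoprodI.of h⁻¹ := by
    simp only [map_inv, mul_assoc]
  have hFx : Fmap Γ x = pilingOfWord Γ t := rfl
  rw [hform, Fmap_mul_of Γ _ j h⁻¹ (inv_ne_one.mpr hh),
    Fmap_mul_of Γ _ i g⁻¹ (inv_ne_one.mpr hg), Fmap_mul_of Γ _ j h hh,
    Fmap_mul_of Γ _ i g hg, hFx]
  rw [← pil_snoc Γ t i g, ← pil_snoc Γ (t ++ [(⟨i, g⟩ : Σ i, G i)]) j h]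
  rw [show pilingOfWord Γ ((t ++ [⟨i, g⟩]) ++ [⟨j, h⟩]) =
      pilingOfWord Γ ((t ++ [⟨j, h⟩]) ++ [⟨i, g⟩]) from by
    rw [← pair_split, ← pair_split]; exact pil_swap Γ t hmemw g h hadj]
  rw [← pil_snoc Γ ((t ++ [(⟨j, h⟩ : Σ i, G i)]) ++ [(⟨i, g⟩ : Σ i, G i)]) i g⁻¹]
  rw [show pilingOfWord Γ (((t ++ [⟨j, h⟩]) ++ [⟨i, g⟩]) ++ [⟨i, g⁻¹⟩]) =
      pilingOfWord Γ (t ++ [⟨j, h⟩]) from by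
    rw [← pair_split]; exact pil_cancel Γ (t ++ [⟨j, h⟩]) hmemwh i g]
  rw [← pil_snoc Γ (t ++ [(⟨j, h⟩ : Σ i, G i)]) j h⁻¹]
  rw [show pilingOfWord Γ ((t ++ [⟨j, h⟩]) ++ [⟨j, h⁻¹⟩]) = pilingOfWord Γ t from by
    rw [← pair_split]; exact pil_cancel Γ t hmemw j h]

lemma Fmap_mul_ncl (n : Monoid.CoprodI G) (hn : n ∈ Subgroup.normalClosure (Rels Γ G))
    (x : Monoid.CoprodI G) : Fmap Γ (x * n) = Fmap Γ x := by
  let S : Subgroup (Monoid.CoprodI G) :=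
    { carrier := {n | ∀ x, Fmap Γ (x * n) = Fmap Γ x}
      one_mem' := fun x => by rw [mul_one]
      mul_mem' := by
        intro p q hp hq x
        rw [← mul_assoc, hq (x * p), hp x]
      inv_mem' := by
        intro p hp x
        have h1 := hp (x * p⁻¹)
        rw [inv_mul_cancel_right] at h1
        exact h1.symm }
  have hS : S.Normal := by
    constructor
    intro p hp c x
    have h1 : x * (c * p * c⁻¹) = ((x * c) * p) * c⁻¹ := by group
    rw [h1]
    have h2 : Fmap Γ ((x * c) * p) = Fmap Γ (x * c) := hp (x * c)
    have h3 := Fmap_mul_congr Γ c⁻¹ _ _ h2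
    rwa [mul_inv_cancel_right] at h3
  have hle : Subgroup.normalClosure (Rels Γ G) ≤ S :=
    Subgroup.normalClosure_le_normal (N := S) (fun r hr x => Fmap_mul_rel Γ r hr x)
  exact hle hn x

lemma prodOfWord_mk (u : List (Σ i, G i)) :
    prodOfWord Γ u = QuotientGroup.mk' (Subgroup.normalClosure (Rels Γ G)) (cprod u) := by
  rw [prodOfWord, cprod, MonoidHom.map_list_prod, List.map_map]
  rfl

end Aux6

set_option maxHeartbeats 1000000 in
/-- The piling of a word is invariant under swapping adjacent
letters from adjacent vertex groups and under free cancellation; consequently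
any two words representing the same element of the graph product have equal
pilings, and the piling descends to a well-defined map on the graph product. -/
theorem piling_well_defined {D : ℕ} (Γ : SimpleGraph (Fin D))
    (G : Fin D → Type*) [∀ i, Group (G i)] :
    (∀ (u : List (Σ i, G i)), (∀ l ∈ u, l.2 ≠ 1) →
      ∀ (i j : Fin D) (si : G i) (sj : G j), si ≠ 1 → sj ≠ 1 → Γ.Adj i j →
        pilingOfWord Γ (u ++ [⟨i, si⟩, ⟨j, sj⟩]) =
          pilingOfWord Γ (u ++ [⟨j, sj⟩, ⟨i, si⟩])) ∧
    (∀ (u : List (Σ i, G i)), (∀ l ∈ u, l.2 ≠ 1) →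
      ∀ (i : Fin D) (g : G i), g ≠ 1 →
        pilingOfWord Γ (u ++ [⟨i, g⟩, ⟨i, g⁻¹⟩]) = pilingOfWord Γ u) ∧
    (∀ u v : List (Σ i, G i), (∀ l ∈ u, l.2 ≠ 1) → (∀ l ∈ v, l.2 ≠ 1) →
        prodOfWord Γ u = prodOfWord Γ v → pilingOfWord Γ u = pilingOfWord Γ v) ∧
    (∃ Pi : GP Γ G → PilingT G, ∀ u : List (Σ i, G i), (∀ l ∈ u, l.2 ≠ 1) →
        Pi (prodOfWord Γ u) = pilingOfWord Γ u) := by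
  have key : ∀ u v : List (Σ i, G i), (∀ l ∈ u, l.2 ≠ 1) → (∀ l ∈ v, l.2 ≠ 1) →
      prodOfWord Γ u = prodOfWord Γ v → pilingOfWord Γ u = pilingOfWord Γ v := by
    intro u v hu hv hp
    rw [prodOfWord_mk, prodOfWord_mk] at hp
    obtain ⟨z, hz, hmul⟩ := (QuotientGroup.mk'_eq_mk' _).mp hp
    have h1 := Fmap_mul_ncl Γ z hz (cprod u)
    rw [hmul] at h1
    rw [← Fmap_cprod Γ u hu, ← Fmap_cprod Γ v hv, ← h1]
  refine ⟨?_, ?_, key, ?_⟩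
  · intro u hu i j si sj _ _ hadj
    exact pil_swap Γ u hu si sj hadj
  · intro u hu i g _
    exact pil_cancel Γ u hu i g
  · refine ⟨fun q => Fmap Γ (Quotient.out q), ?_⟩
    intro u hu
    show Fmap Γ (Quotient.out (prodOfWord Γ u)) = pilingOfWord Γ u
    have h1 : QuotientGroup.mk' (Subgroup.normalClosure (Rels Γ G))
        ((Quotient.out (prodOfWord Γ u))) = QuotientGroup.mk' (Subgroup.normalClosure (Rels Γ G))
          (cprod u) := by
      rw [← prodOfWord_mk]
      exact QuotientGroup.out_eq' _
    obtain ⟨z, hz, hmul⟩ := (QuotientGroup.mk'_eq_mk' _).mp h1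
    have h2 := Fmap_mul_ncl Γ z hz ((Quotient.out (prodOfWord Γ u)))
    rw [hmul] at h2
    rw [← Fmap_cprod Γ u hu]
    exact h2.symm

end GraphProductDrift
end

section
/- Let B, C, D be positive integers with D > 3B + 2C, and let U be the integer-valued random variable with P(U = 1) = (D−(B+C))/D and P(U ≤ −j) = ((B+C)/D)·(B/(D−(B+C)))^{j−1} for every integer j ≥ 1. Then E[U] > 0. -/
open MeasureTheory ProbabilityTheory
open scoped ENNReal

lemma aux_summable {r : ℝ} (h0 : 0 ≤ r) (h1 : r < 1) :
    Summable (fun n : ℕ => ((n : ℝ) + 1) * r ^ n) := by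
  have hs1 : Summable (fun n : ℕ => (n : ℝ) * r ^ n) := by
    simpa using summable_pow_mul_geometric_of_norm_lt_one 1
      (r := r) (by rwa [Real.norm_of_nonneg h0])
  have hs2 : Summable (fun n : ℕ => r ^ n) := summable_geometric_of_lt_one h0 h1
  exact (hs1.add hs2).congr (fun n => by ring)

lemma aux_tsum {r : ℝ} (h0 : 0 ≤ r) (h1 : r < 1) :
    ∑' n : ℕ, ((n : ℝ) + 1) * r ^ n = ((1 - r) ^ 2)⁻¹ := by
  have hs1 : Summable (fun n : ℕ => (n : ℝ) * r ^ n) := by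
    simpa using summable_pow_mul_geometric_of_norm_lt_one 1
      (r := r) (by rwa [Real.norm_of_nonneg h0])
  have hs2 : Summable (fun n : ℕ => r ^ n) := summable_geometric_of_lt_one h0 h1
  have hne : 1 - r ≠ 0 := by linarith
  calc ∑' n : ℕ, ((n : ℝ) + 1) * r ^ n
      = ∑' n : ℕ, ((n : ℝ) * r ^ n + r ^ n) := by
        exact tsum_congr fun n => by ring
    _ = (∑' n : ℕ, (n : ℝ) * r ^ n) + ∑' n : ℕ, r ^ n := Summable.tsum_add hs1 hs2
    _ = r / (1 - r) ^ 2 + (1 - r)⁻¹ := by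
        rw [tsum_coe_mul_geometric_of_norm_lt_one (by rwa [Real.norm_of_nonneg h0]),
          tsum_geometric_of_lt_one h0 h1]
    _ = ((1 - r) ^ 2)⁻¹ := by field_simp; ring

/-- If `D > 3B + 2C` then the integer-valued random variable
`U` with the given distribution has positive expectation. -/
theorem expectation_U_pos (B C D : ℕ) (hB : 0 < B) (hC : 0 < C) (hD : 0 < D)
    (h : D > 3 * B + 2 * C)
    (Ω : Type*) [MeasurableSpace Ω] (P : Measure Ω) [IsProbabilityMeasure P]
    (U : Ω → ℤ) (hU : Measurable U)
    (hU1 : P {ω | U ω = 1} = ENNReal.ofReal (((D:ℝ) - ((B:ℝ) + (C:ℝ))) / (D:ℝ)))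
    (hU2 : ∀ j : ℕ, 1 ≤ j → P {ω | U ω ≤ -(j:ℤ)} =
      ENNReal.ofReal ((((B:ℝ) + (C:ℝ)) / (D:ℝ)) *
        ((B:ℝ) / ((D:ℝ) - ((B:ℝ) + (C:ℝ)))) ^ (j - 1)))
    (hU0 : ∀ k : ℤ, k ≠ 1 → ¬ k ≤ -1 → P {ω | U ω = k} = 0) :
    0 < ∫ ω, ((U ω : ℤ) : ℝ) ∂P := by
  -- basic numeric facts
  have hb : (0:ℝ) < B := by exact_mod_cast hB
  have hc : (0:ℝ) < C := by exact_mod_cast hC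
  have hd : (0:ℝ) < D := by exact_mod_cast hD
  have hbig : 3*(B:ℝ) + 2*(C:ℝ) < D := by exact_mod_cast h
  set q : ℝ := ((B:ℝ) + (C:ℝ)) / (D:ℝ) with hq_def
  set r : ℝ := (B:ℝ) / ((D:ℝ) - ((B:ℝ) + (C:ℝ))) with hr_def
  set p1 : ℝ := ((D:ℝ) - ((B:ℝ) + (C:ℝ))) / (D:ℝ) with hp1_def
  have hdbc : 0 < (D:ℝ) - ((B:ℝ) + (C:ℝ)) := by linarith
  have hr0 : 0 ≤ r := by rw [hr_def]; positivity
  have hr1 : r < 1 := by rw [hr_def, div_lt_one hdbc]; linarith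
  have h1r : 0 < 1 - r := by linarith
  have hq0 : 0 ≤ q := by rw [hq_def]; positivity
  have hp10 : 0 ≤ p1 := by rw [hp1_def]; positivity
  -- tail probabilities
  have hT : ∀ n : ℕ, P {ω | U ω ≤ -(n:ℤ) - 1} = ENNReal.ofReal (q * r ^ n) := by
    intro n
    have h2 := hU2 (n+1) (by omega)
    have hset : {ω | U ω ≤ -(((n:ℕ)+1 : ℕ):ℤ)} = {ω | U ω ≤ -(n:ℤ) - 1} := by
      ext ω
      simp only [Set.mem_setOf_eq]
      push_cast
      omega
    rw [hset] at h2
    simpa using h2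
  have hMeas : ∀ t : ℤ, MeasurableSet {ω | U ω ≤ t} := fun t => hU measurableSet_Iic
  -- point probabilities
  have hpoint : ∀ n : ℕ, P {ω | U ω = -(n:ℤ) - 1} = ENNReal.ofReal (q * (1-r) * r ^ n) := by
    intro n
    have hsub : {ω | U ω ≤ -(n:ℤ) - 2} ⊆ {ω | U ω ≤ -(n:ℤ) - 1} := by
      intro ω hω; simp only [Set.mem_setOf_eq] at *; omega
    have hdiff : {ω | U ω = -(n:ℤ) - 1} =
        {ω | U ω ≤ -(n:ℤ) - 1} \ {ω | U ω ≤ -(n:ℤ) - 2} := by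
      ext ω; simp only [Set.mem_setOf_eq, Set.mem_diff]; omega
    rw [hdiff, measure_diff hsub (hMeas _).nullMeasurableSet (measure_ne_top P _)]
    have hset2 : {ω | U ω ≤ -(n:ℤ) - 2} = {ω | U ω ≤ -((n+1 : ℕ):ℤ) - 1} := by
      ext ω; simp only [Set.mem_setOf_eq]; push_cast; omega
    rw [hset2, hT (n+1), hT n, ← ENNReal.ofReal_sub _ (by positivity)]
    congr 1
    ring
  -- move to the pushforward measure
  set μ : Measure ℤ := P.map U with hμ_def
  haveI : IsProbabilityMeasure μ := Measure.isProbabilityMeasure_map hU.aemeasurable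
  have hμs : ∀ k : ℤ, μ {k} = P {ω | U ω = k} := by
    intro k
    rw [hμ_def, Measure.map_apply hU (measurableSet_singleton k)]
    rfl
  have hμ1 : μ {1} = ENNReal.ofReal p1 := by rw [hμs]; exact hU1
  have hμn : ∀ n : ℕ, μ {(-(n:ℤ) - 1)} = ENNReal.ofReal (q * (1-r) * r ^ n) := by
    intro n; rw [hμs]; exact hpoint n
  have hμ0 : ∀ k : ℤ, k ≠ 1 → ¬ k ≤ -1 → μ {k} = 0 := by
    intro k h1 h2; rw [hμs]; exact hU0 k h1 h2
  -- the index map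
  set e : ℕ → ℤ := (fun n => if n = 0 then 1 else -(n:ℤ)) with he_def
  have he0 : e 0 = 1 := by simp [he_def]
  have heS : ∀ n : ℕ, e (n+1) = -(n:ℤ) - 1 := by
    intro n; simp only [he_def, Nat.succ_ne_zero, if_false]; push_cast; ring
  have he : Function.Injective e := by
    intro m n hmn
    simp only [he_def] at hmn
    split_ifs at hmn <;> omega
  have hrange : ∀ k : ℤ, (k = 1 ∨ k ≤ -1) → k ∈ Set.range e := by
    intro k hk
    rcases hk with hk | hk
    · exact ⟨0, by rw [he0, hk]⟩
    · refine ⟨k.natAbs, ?_⟩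
      simp only [he_def]
      rw [if_neg (by omega)]
      omega
  have hgmeas : Measurable (fun k : ℤ => (k:ℝ)) := measurable_from_top
  -- summability facts
  have hsum : Summable (fun n : ℕ => ((n:ℝ) + 1) * r ^ n) := aux_summable hr0 hr1
  have hsum' : Summable (fun n : ℕ => (q * (1-r)) * (((n:ℝ) + 1) * r ^ n)) :=
    hsum.mul_left _
  -- integrability
  have hInt : Integrable (fun k : ℤ => (k:ℝ)) μ := by
    refine ⟨hgmeas.aestronglyMeasurable, ?_⟩
    rw [hasFiniteIntegral_def]
    rw [lintegral_countable']
    set F : ℤ → ℝ≥0∞ := fun k => ‖(k:ℝ)‖ₑ * μ {k} with hF_def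
    have hFsupp : Function.support F ⊆ Set.range e := by
      intro k hk
      by_contra hkr
      apply hk
      have hk1 : k ≠ 1 := fun hh => hkr (hrange k (Or.inl hh))
      have hk2 : ¬ k ≤ -1 := fun hh => hkr (hrange k (Or.inr hh))
      simp [hF_def, hμ0 k hk1 hk2]
    rw [← he.tsum_eq hFsupp, tsum_eq_zero_add' ENNReal.summable]
    have hFS : ∀ n : ℕ, F (e (n+1)) = ENNReal.ofReal (((n:ℝ)+1) * (q * (1-r) * r ^ n)) := by
      intro n
      rw [hF_def]
      simp only [heS n, hμn n]
      have : ((((-(n:ℤ) - 1) : ℤ)):ℝ) = -(((n:ℝ)+1)) := by push_cast; ring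
      rw [this, enorm_neg, Real.enorm_eq_ofReal (by positivity),
        ← ENNReal.ofReal_mul (by positivity)]
    have hF0 : F (e 0) = ENNReal.ofReal p1 := by
      rw [hF_def, he0]
      simp [hμ1]
    rw [hF0]
    have : ∑' n : ℕ, F (e (n+1)) =
        ENNReal.ofReal (∑' n : ℕ, ((n:ℝ)+1) * (q * (1-r) * r ^ n)) := by
      rw [ENNReal.ofReal_tsum_of_nonneg (fun n => by positivity)
        (hsum'.congr (fun n => by ring))]
      exact tsum_congr hFS
    rw [this]
    exact ENNReal.add_lt_top.mpr ⟨ENNReal.ofReal_lt_top, ENNReal.ofReal_lt_top⟩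
  -- compute the integral
  have hmap : ∫ ω, ((U ω : ℤ) : ℝ) ∂P = ∫ k : ℤ, (k:ℝ) ∂μ := by
    rw [hμ_def, integral_map hU.aemeasurable hgmeas.aestronglyMeasurable]
  rw [hmap, integral_countable' hInt]
  set G : ℤ → ℝ := fun k => (μ {k}).toReal • (k:ℝ) with hG_def
  have hGsupp : Function.support G ⊆ Set.range e := by
    intro k hk
    by_contra hkr
    apply hk
    have hk1 : k ≠ 1 := fun hh => hkr (hrange k (Or.inl hh))
    have hk2 : ¬ k ≤ -1 := fun hh => hkr (hrange k (Or.inr hh))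
    simp [hG_def, hμ0 k hk1 hk2]
  have hGS : ∀ n : ℕ, G (e (n+1)) = -((q * (1-r)) * (((n:ℝ)+1) * r ^ n)) := by
    intro n
    rw [hG_def]
    simp only [heS n, hμn n]
    rw [ENNReal.toReal_ofReal (by positivity), smul_eq_mul]
    push_cast
    ring
  have hG0 : G (e 0) = p1 := by
    rw [he0]
    show (μ {1}).toReal • ((1:ℤ):ℝ) = p1
    rw [hμ1, ENNReal.toReal_ofReal hp10]
    simp
  have hGshift : Summable (fun n : ℕ => G (e (n+1))) :=
    (hsum'.neg).congr (fun n => (hGS n).symm)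
  have hGe : Summable (fun n : ℕ => G (e n)) := (summable_nat_add_iff 1).mp hGshift
  show 0 < ∑' k, G k
  rw [← he.tsum_eq hGsupp, Summable.tsum_eq_zero_add hGe, hG0]
  have htail : ∑' n : ℕ, G (e (n+1)) = -((q * (1-r)) * ((1 - r)^2)⁻¹) := by
    rw [tsum_congr hGS, tsum_neg, tsum_mul_left, aux_tsum hr0 hr1]
  rw [htail]
  -- final arithmetic
  have hkey : (q * (1-r)) * ((1 - r)^2)⁻¹ = q / (1 - r) := by
    rw [sq]
    field_simp
  rw [hkey]
  have h1rval : p1 * (1 - r) = ((D:ℝ) - 2*(B:ℝ) - (C:ℝ)) / (D:ℝ) := by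
    rw [hp1_def, hr_def]
    field_simp
    ring
  have hlt : q / (1 - r) < p1 := by
    rw [div_lt_iff₀ h1r, ← sub_pos, h1rval, hq_def, div_sub_div_same]
    apply div_pos _ hd
    linarith
  linarith
end

section
/- Let B, C, D be positive integers with D > 3B + 2C, and let U be the integer-valued random variable with P(U = 1) = (D−(B+C))/D and P(U ≤ −j) = ((B+C)/D)·(B/(D−(B+C)))^{j−1} for every integer j ≥ 1. Then there exists t > 0 with E[e^{−tU}] < 1; in particular there exists κ > 0 with κ < (−ln E[e^{−tU}])/(1+t). -/
open MeasureTheory ProbabilityTheory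
open scoped ENNReal

lemma key_ineq (q r a : ℝ) (ha1 : 1 < a)
    (hra : r * a < 1) (haM : (q * (1 - r) + r) * a < 1 - q) :
    (1 - q) / a + q * (1 - r) * a / (1 - r * a) < 1 := by
  have ha0 : (0:ℝ) < a := by linarith
  have hden : (0:ℝ) < 1 - r * a := by linarith
  have h1 : (1 - q) / a + q * (1 - r) * a / (1 - r * a) - 1
      = (a - 1) * ((q * (1 - r) + r) * a - (1 - q)) / (a * (1 - r * a)) := by
    rw [div_add_div _ _ ha0.ne' hden.ne', div_sub_one (mul_ne_zero ha0.ne' hden.ne')]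
    ring
  have h2 : (a - 1) * ((q * (1 - r) + r) * a - (1 - q)) / (a * (1 - r * a)) < 0 := by
    apply div_neg_of_neg_of_pos
    · exact mul_neg_of_pos_of_neg (by linarith) (by linarith)
    · positivity
  linarith

lemma mgf_aux (q r : ℝ) (hq0 : 0 < q) (hq1 : q < 1) (hr0 : 0 < r) (hr1 : r < 1)
    (hMlt : q * (1 - r) + r < 1 - q)
    (Ω : Type*) [MeasurableSpace Ω] (P : Measure Ω) [IsProbabilityMeasure P]
    (U : Ω → ℤ) (hU : Measurable U)
    (hU1 : P {ω | U ω = 1} = ENNReal.ofReal (1 - q))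
    (hU2 : ∀ j : ℕ, 1 ≤ j → P {ω | U ω ≤ -(j:ℤ)} = ENNReal.ofReal (q * r ^ (j - 1)))
    (hU0 : ∀ k : ℤ, k ≠ 1 → ¬ k ≤ -1 → P {ω | U ω = k} = 0) :
    ∃ t : ℝ, 0 < t ∧ ∫⁻ ω, ENNReal.ofReal (Real.exp (-t * (U ω : ℝ))) ∂P < 1 ∧
      ∃ κ : ℝ, 0 < κ ∧
        κ < (- Real.log ((∫⁻ ω, ENNReal.ofReal (Real.exp (-t * (U ω : ℝ))) ∂P).toReal))
          / (1 + t) := by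
  have h1r : (0:ℝ) < 1 - r := by linarith
  have hM0 : 0 < q * (1 - r) + r := by nlinarith
  obtain ⟨a, ha1, hra, haM⟩ : ∃ a : ℝ, 1 < a ∧ r * a < 1 ∧ (q * (1 - r) + r) * a < 1 - q := by
    refine ⟨(1 + (1 - q) / (q * (1 - r) + r)) / 2, ?_, ?_, ?_⟩
    · have : 1 < (1 - q) / (q * (1 - r) + r) := (one_lt_div hM0).2 hMlt
      linarith
    · have h2 : r * ((1 - q) / (q * (1 - r) + r)) < 1 := by
        rw [mul_div_assoc', div_lt_one hM0]; nlinarith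
      have h3 : r * 1 < 1 := by linarith
      nlinarith [hr0, h2]
    · have : (q * (1 - r) + r) * ((1 + (1 - q) / (q * (1 - r) + r)) / 2)
          = ((q * (1 - r) + r) + (1 - q)) / 2 := by
        field_simp
      rw [this]; linarith
  have ha0 : (0:ℝ) < a := by linarith
  have h1ra : (0:ℝ) < 1 - r * a := by linarith
  refine ⟨Real.log a, Real.log_pos ha1, ?_⟩
  set t : ℝ := Real.log a with ht_def
  have hexp : Real.exp t = a := Real.exp_log ha0
  -- the integral as a sum over ℤ
  have hmap : ∫⁻ ω, ENNReal.ofReal (Real.exp (-t * (U ω : ℝ))) ∂P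
      = ∑' k : ℤ, ENNReal.ofReal (Real.exp (-t * (k:ℝ))) * P {ω | U ω = k} := by
    rw [← lintegral_map (f := fun k : ℤ => ENNReal.ofReal (Real.exp (-t * (k:ℝ))))
      (measurable_of_countable _) hU, lintegral_countable']
    exact tsum_congr fun k => by
      rw [Measure.map_apply hU (measurableSet_singleton k)]; rfl
  -- probabilities of negative values
  have hneg : ∀ n : ℕ, P {ω | U ω = -((n:ℤ)+1)} = ENNReal.ofReal (q * (1 - r) * r ^ n) := by
    intro n
    have hset : {ω | U ω ≤ -(((n+1:ℕ)):ℤ)}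
        = {ω | U ω = -((n:ℤ)+1)} ∪ {ω | U ω ≤ -(((n+2:ℕ)):ℤ)} := by
      ext ω; simp only [Set.mem_setOf_eq, Set.mem_union]; omega
    have hdisj : Disjoint {ω | U ω = -((n:ℤ)+1)} {ω | U ω ≤ -(((n+2:ℕ)):ℤ)} := by
      rw [Set.disjoint_left]
      intro ω hw1 hw2
      simp only [Set.mem_setOf_eq] at hw1 hw2
      omega
    have hmeas : MeasurableSet {ω | U ω ≤ -(((n+2:ℕ)):ℤ)} := hU measurableSet_Iic
    have hsum : P {ω | U ω ≤ -(((n+1:ℕ)):ℤ)}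
        = P {ω | U ω = -((n:ℤ)+1)} + P {ω | U ω ≤ -(((n+2:ℕ)):ℤ)} := by
      rw [hset, measure_union hdisj hmeas]
    rw [hU2 (n+1) (by omega), hU2 (n+2) (by omega)] at hsum
    simp only [Nat.add_sub_cancel, show n+2-1 = n+1 by omega] at hsum
    have hsplit : ENNReal.ofReal (q * r ^ n)
        = ENNReal.ofReal (q * (1-r) * r ^ n) + ENNReal.ofReal (q * r ^ (n+1)) := by
      rw [← ENNReal.ofReal_add
        (mul_nonneg (mul_nonneg hq0.le h1r.le) (pow_nonneg hr0.le n))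
        (mul_nonneg hq0.le (pow_nonneg hr0.le (n+1)))]
      congr 1; ring
    rw [hsplit] at hsum
    exact ((ENNReal.add_left_inj ENNReal.ofReal_ne_top).1 hsum).symm
  -- reindex the tsum
  have htsum : ∑' k : ℤ, ENNReal.ofReal (Real.exp (-t * (k:ℝ))) * P {ω | U ω = k}
      = ENNReal.ofReal (Real.exp (-t * ((1:ℤ):ℝ))) * P {ω | U ω = 1}
        + ∑' n : ℕ, ENNReal.ofReal (Real.exp (-t * ((-((n:ℤ)+1) : ℤ):ℝ)))
            * P {ω | U ω = -((n:ℤ)+1)} := by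
    set g : ℤ → ℝ≥0∞ := fun k => ENNReal.ofReal (Real.exp (-t * (k:ℝ))) * P {ω | U ω = k}
      with hg_def
    have hιinj : Function.Injective (fun n : ℕ => if n = 0 then (1:ℤ) else -(n:ℤ)) := by
      intro m n hmn
      simp only at hmn
      split_ifs at hmn <;> omega
    have hsupp : Function.support g ⊆ Set.range (fun n : ℕ => if n = 0 then (1:ℤ) else -(n:ℤ)) := by
      intro k hk
      by_contra hk'
      apply hk
      have hk1 : k ≠ 1 := fun hh => hk' ⟨0, by simp [hh]⟩
      have hk2 : ¬ k ≤ -1 := fun hh =>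
        hk' ⟨k.natAbs, by simp only; split_ifs with h0 <;> omega⟩
      simp [hg_def, hU0 k hk1 hk2]
    have := hιinj.tsum_eq hsupp
    rw [← this, tsum_eq_zero_add' ENNReal.summable]
    refine congrArg₂ (· + ·) (congrArg g (by norm_num)) (tsum_congr fun n =>
      congrArg g (by rw [if_neg (Nat.succ_ne_zero n)]; push_cast; ring))
  -- value at 1
  have hg1 : ENNReal.ofReal (Real.exp (-t * ((1:ℤ):ℝ))) * P {ω | U ω = 1}
      = ENNReal.ofReal ((1 - q) / a) := by
    rw [hU1, ← ENNReal.ofReal_mul (Real.exp_pos _).le]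
    congr 1
    rw [show (-t * ((1:ℤ):ℝ)) = -t by norm_num, Real.exp_neg, hexp]
    rw [div_eq_mul_inv, mul_comm]
  -- negative terms
  have hgneg : ∀ n : ℕ, ENNReal.ofReal (Real.exp (-t * ((-((n:ℤ)+1) : ℤ):ℝ)))
        * P {ω | U ω = -((n:ℤ)+1)}
      = ENNReal.ofReal (q * (1-r) * a) * ENNReal.ofReal (r * a) ^ n := by
    intro n
    rw [hneg n, ← ENNReal.ofReal_mul (Real.exp_pos _).le]
    have he : (-t * ((-((n:ℤ)+1) : ℤ):ℝ)) = ((n+1:ℕ):ℝ) * t := by push_cast; ring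
    rw [he, Real.exp_nat_mul, hexp]
    rw [← ENNReal.ofReal_pow (mul_nonneg hr0.le ha0.le),
      ← ENNReal.ofReal_mul (mul_nonneg (mul_nonneg hq0.le h1r.le) ha0.le)]
    congr 1
    ring
  have hgeo : ∑' n : ℕ, ENNReal.ofReal (Real.exp (-t * ((-((n:ℤ)+1) : ℤ):ℝ)))
        * P {ω | U ω = -((n:ℤ)+1)}
      = ENNReal.ofReal (q * (1-r) * a) * ENNReal.ofReal ((1 - r*a)⁻¹) := by
    rw [tsum_congr hgneg, ENNReal.tsum_mul_left, ENNReal.tsum_geometric]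
    congr 1
    rw [ENNReal.ofReal_inv_of_pos h1ra, ← ENNReal.ofReal_one,
      ← ENNReal.ofReal_sub _ (mul_nonneg hr0.le ha0.le)]
  -- put together
  have hL : ∫⁻ ω, ENNReal.ofReal (Real.exp (-t * (U ω : ℝ))) ∂P
      = ENNReal.ofReal ((1 - q) / a + q * (1 - r) * a / (1 - r * a)) := by
    rw [hmap, htsum, hg1, hgeo,
      ← ENNReal.ofReal_mul (mul_nonneg (mul_nonneg hq0.le h1r.le) ha0.le),
      ← ENNReal.ofReal_add (div_nonneg (by linarith) ha0.le)
        (mul_nonneg (mul_nonneg (mul_nonneg hq0.le h1r.le) ha0.le) (inv_nonneg.2 h1ra.le))]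
    congr 1
  have hV1 : (1 - q) / a + q * (1 - r) * a / (1 - r * a) < 1 := key_ineq q r a ha1 hra haM
  have hV0 : 0 < (1 - q) / a + q * (1 - r) * a / (1 - r * a) := by
    have h1 : 0 < (1 - q)/a := div_pos (by linarith) ha0
    have h2 : 0 ≤ q * (1-r) * a / (1 - r*a) := by positivity
    linarith
  rw [hL]
  refine ⟨ENNReal.ofReal_lt_one.2 hV1, ?_⟩
  rw [ENNReal.toReal_ofReal hV0.le]
  have hlog : 0 < - Real.log ((1 - q) / a + q * (1 - r) * a / (1 - r * a)) := by
    have := Real.log_neg hV0 hV1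
    linarith
  have ht0 : (0:ℝ) < t := Real.log_pos ha1
  have hpos : 0 < (- Real.log ((1 - q) / a + q * (1 - r) * a / (1 - r * a))) / (1 + t) :=
    div_pos hlog (by linarith)
  exact ⟨_ / 2, by positivity, half_lt_self hpos⟩

/-- If `D > 3B + 2C` then there exists `t > 0` with
`E[e^{-tU}] < 1`; in particular there exists `κ > 0` with
`κ < (-ln E[e^{-tU}])/(1+t)`. -/
theorem exists_t_mgf_lt_one (B C D : ℕ) (hB : 0 < B) (hC : 0 < C) (hD : 0 < D)
    (h : D > 3 * B + 2 * C)
    (Ω : Type*) [MeasurableSpace Ω] (P : Measure Ω) [IsProbabilityMeasure P]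
    (U : Ω → ℤ) (hU : Measurable U)
    (hU1 : P {ω | U ω = 1} = ENNReal.ofReal (((D:ℝ) - ((B:ℝ) + (C:ℝ))) / (D:ℝ)))
    (hU2 : ∀ j : ℕ, 1 ≤ j → P {ω | U ω ≤ -(j:ℤ)} =
      ENNReal.ofReal ((((B:ℝ) + (C:ℝ)) / (D:ℝ)) *
        ((B:ℝ) / ((D:ℝ) - ((B:ℝ) + (C:ℝ)))) ^ (j - 1)))
    (hU0 : ∀ k : ℤ, k ≠ 1 → ¬ k ≤ -1 → P {ω | U ω = k} = 0) :
    ∃ t : ℝ, 0 < t ∧ ∫⁻ ω, ENNReal.ofReal (Real.exp (-t * (U ω : ℝ))) ∂P < 1 ∧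
      ∃ κ : ℝ, 0 < κ ∧
        κ < (- Real.log ((∫⁻ ω, ENNReal.ofReal (Real.exp (-t * (U ω : ℝ))) ∂P).toReal))
          / (1 + t) := by
  have hD3 : (3*B + 2*C : ℝ) < D := by exact_mod_cast h
  have hB0 : (0:ℝ) < B := by exact_mod_cast hB
  have hC0 : (0:ℝ) < C := by exact_mod_cast hC
  have hD0 : (0:ℝ) < D := by exact_mod_cast hD
  have hdpos : (0:ℝ) < (D:ℝ) - ((B:ℝ) + C) := by linarith
  have hq0 : 0 < ((B:ℝ) + C) / D := by positivity
  have hq1 : ((B:ℝ) + C) / D < 1 := by rw [div_lt_one hD0]; linarith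
  have hr0 : 0 < (B:ℝ) / ((D:ℝ) - ((B:ℝ) + C)) := by positivity
  have hr1 : (B:ℝ) / ((D:ℝ) - ((B:ℝ) + C)) < 1 := by rw [div_lt_one hdpos]; linarith
  have hMlt : ((B:ℝ) + C) / D * (1 - (B:ℝ) / ((D:ℝ) - ((B:ℝ) + C)))
      + (B:ℝ) / ((D:ℝ) - ((B:ℝ) + C)) < 1 - ((B:ℝ) + C) / D := by
    have key : (1 - ((B:ℝ) + C) / D) - (((B:ℝ) + C) / D * (1 - (B:ℝ) / ((D:ℝ) - ((B:ℝ) + C)))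
        + (B:ℝ) / ((D:ℝ) - ((B:ℝ) + C)))
        = (((D:ℝ) - ((B:ℝ) + C)) * ((D:ℝ) - (3*(B:ℝ) + 2*(C:ℝ))))
          / ((D:ℝ) * ((D:ℝ) - ((B:ℝ) + C))) := by
      field_simp
      ring
    have hpos : 0 < (((D:ℝ) - ((B:ℝ) + C)) * ((D:ℝ) - (3*(B:ℝ) + 2*(C:ℝ))))
        / ((D:ℝ) * ((D:ℝ) - ((B:ℝ) + C))) := by
      apply div_pos (mul_pos hdpos (by linarith)) (by positivity)
    linarith
  have hU1' : P {ω | U ω = 1} = ENNReal.ofReal (1 - ((B:ℝ) + C) / D) := by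
    rw [hU1]
    congr 1
    field_simp
  exact mgf_aux (((B:ℝ) + C) / D) ((B:ℝ) / ((D:ℝ) - ((B:ℝ) + C))) hq0 hq1 hr0 hr1 hMlt
    Ω P U hU hU1' hU2 hU0
end

section
/- Let B, C, D be positive integers with D > 2B + C, and let U be the integer-valued random variable with P(U = 1) = (D−(B+C))/D and P(U ≤ −j) = ((B+C)/D)·(B/(D−(B+C)))^{j−1} for every integer j ≥ 1. Then for every t > 0 with e^{t}B < D−(B+C), one has E[e^{−tU}] = e^{−t}·(D−B−C)/D + ((B+C)/D)·e^{t}·(D−2B−C)/(D−B−C−e^{t}B). -/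
open MeasureTheory ProbabilityTheory
open scoped ENNReal


/-- Explicit formula for `E[e^{-tU}]` for the integer-valued
random variable `U` with the given distribution, valid whenever `t > 0` and
`e^t B < D - (B + C)`. -/
theorem mgf_U_formula (B C D : ℕ) (hB : 0 < B) (hC : 0 < C) (hD : 0 < D)
    (h : D > 2 * B + C)
    (Ω : Type*) [MeasurableSpace Ω] (P : Measure Ω) [IsProbabilityMeasure P]
    (U : Ω → ℤ) (hU : Measurable U)
    (hU1 : P {ω | U ω = 1} = ENNReal.ofReal (((D:ℝ) - ((B:ℝ) + (C:ℝ))) / (D:ℝ)))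
    (hU2 : ∀ j : ℕ, 1 ≤ j → P {ω | U ω ≤ -(j:ℤ)} =
      ENNReal.ofReal ((((B:ℝ) + (C:ℝ)) / (D:ℝ)) *
        ((B:ℝ) / ((D:ℝ) - ((B:ℝ) + (C:ℝ)))) ^ (j - 1)))
    (hU0 : ∀ k : ℤ, k ≠ 1 → ¬ k ≤ -1 → P {ω | U ω = k} = 0)
    (t : ℝ) (ht : 0 < t)
    (hsmall : Real.exp t * (B:ℝ) < (D:ℝ) - ((B:ℝ) + (C:ℝ))) :
    ∫ ω, Real.exp (-t * (U ω : ℝ)) ∂P =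
      Real.exp (-t) * (((D:ℝ) - (B:ℝ) - (C:ℝ)) / (D:ℝ)) +
        (((B:ℝ) + (C:ℝ)) / (D:ℝ)) * Real.exp t *
          (((D:ℝ) - 2 * (B:ℝ) - (C:ℝ)) /
            ((D:ℝ) - (B:ℝ) - (C:ℝ) - Real.exp t * (B:ℝ))) := by
  have hD' : (0:ℝ) < D := by exact_mod_cast hD
  have hBR : (0:ℝ) < B := by exact_mod_cast hB
  have hCR : (0:ℝ) < C := by exact_mod_cast hC
  have h' : (2*(B:ℝ) + C : ℝ) < D := by exact_mod_cast h
  have hDBC : (0:ℝ) < (D:ℝ) - ((B:ℝ) + (C:ℝ)) := by linarith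
  set a : ℝ := ((B:ℝ) + C) / D with ha
  set r : ℝ := (B:ℝ) / ((D:ℝ) - ((B:ℝ) + (C:ℝ))) with hr
  have ha0 : 0 < a := by positivity
  have hr0 : 0 < r := by positivity
  have hrlt : r < 1 := (div_lt_one hDBC).2 (by linarith)
  set x : ℝ := Real.exp t * r with hxdef
  have hx0 : 0 ≤ x := by positivity
  have hx1 : x < 1 := by
    rw [hxdef, hr, ← mul_div_assoc, div_lt_one hDBC]
    exact hsmall
  set c : ℝ := a * (1 - r) * Real.exp t with hc
  have hc0 : 0 ≤ c := by
    have : 0 ≤ 1 - r := by linarith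
    positivity
  -- point masses for negative values
  have hpoint : ∀ j : ℕ, P {ω | U ω = -((j:ℤ)+1)} =
      ENNReal.ofReal (a * (1 - r) * r ^ j) := by
    intro j
    have h1 := hU2 (j+1) (by omega)
    have h2 := hU2 (j+2) (by omega)
    simp only [Nat.add_sub_cancel, Nat.cast_add, Nat.cast_one, Nat.cast_ofNat] at h1 h2
    have hset : {ω | U ω ≤ -((j:ℤ)+1)} =
        {ω | U ω = -((j:ℤ)+1)} ∪ {ω | U ω ≤ -((j:ℤ)+2)} := by
      ext ω; simp only [Set.mem_setOf_eq, Set.mem_union]; omega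
    have hdisj : Disjoint {ω | U ω = -((j:ℤ)+1)} {ω | U ω ≤ -((j:ℤ)+2)} := by
      rw [Set.disjoint_left]; intro ω h1 h2
      simp only [Set.mem_setOf_eq] at h1 h2; omega
    have hm2 : MeasurableSet {ω | U ω ≤ -((j:ℤ)+2)} := hU measurableSet_Iic
    have hsum : P {ω | U ω = -((j:ℤ)+1)} + P {ω | U ω ≤ -((j:ℤ)+2)}
        = ENNReal.ofReal (a * r ^ j) := by
      rw [← measure_union hdisj hm2, ← hset, h1]
    have htail : P {ω | U ω ≤ -((j:ℤ)+2)} = ENNReal.ofReal (a * r ^ (j+1)) := by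
      rw [h2]; norm_num
    rw [htail] at hsum
    have := ENNReal.eq_sub_of_add_eq (by exact ENNReal.ofReal_ne_top) hsum
    rw [this, ← ENNReal.ofReal_sub _ (by positivity)]
    congr 1; ring
  -- pass to the pushforward measure
  set μ : Measure ℤ := P.map U with hμdef
  have hμ : ∀ k : ℤ, μ {k} = P {ω | U ω = k} := by
    intro k
    rw [hμdef, Measure.map_apply hU (measurableSet_singleton k)]
    congr 1
  -- the real-valued summand sequence
  set s : ℕ → ℝ := fun n => if n = 0 then Real.exp (-t) * (((D:ℝ) - ((B:ℝ)+(C:ℝ)))/D)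
      else c * x ^ (n-1) with hs
  have hs0 : ∀ n, 0 ≤ s n := by
    intro n
    rw [hs]
    dsimp only
    split
    · positivity
    · positivity
  have hssum : Summable s := by
    rw [← summable_nat_add_iff 1]
    have : (fun n => s (n+1)) = fun n => c * x ^ n := by
      funext n; simp [hs]
    rw [this]
    exact (summable_geometric_of_lt_one hx0 hx1).mul_left c
  -- reindexing injection
  set e : ℕ → ℤ := fun n => if n = 0 then 1 else -(n:ℤ) with he
  have hinj : Function.Injective e := by
    intro m n hmn
    rcases m with _ | m <;> rcases n with _ | n <;> simp [he] at hmn <;> omega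
  -- the ENNReal summand
  set f : ℤ → ℝ≥0∞ := fun k => ENNReal.ofReal (Real.exp (-t * (k:ℝ))) * μ {k} with hf
  have hsupp : Function.support f ⊆ Set.range e := by
    intro k hk
    by_contra hkr
    have hk1 : k ≠ 1 := by
      intro hk1; exact hkr ⟨0, by simp [he, hk1]⟩
    have hkneg : ¬ k ≤ -1 := by
      intro hkneg
      exact hkr ⟨(-k).toNat, by simp only [he]; rw [if_neg (by omega)]; omega⟩
    apply hk
    rw [hf]
    simp only [hμ k, hU0 k hk1 hkneg, mul_zero]
  have hfe : ∀ n : ℕ, f (e n) = ENNReal.ofReal (s n) := by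
    intro n
    rcases n with _ | n
    · simp only [hf, he, hs, if_pos rfl]
      rw [hμ, hU1, ← ENNReal.ofReal_mul (by positivity)]
      norm_num
    · have hen : e (n+1) = -((n:ℤ)+1) := by simp [he]
      rw [hf]
      dsimp only
      rw [hen, hμ, hpoint n, ← ENNReal.ofReal_mul (by positivity)]
      rw [hs]
      simp only [Nat.add_sub_cancel, if_neg (Nat.succ_ne_zero n)]
      congr 1
      have : Real.exp (-t * (((-((n:ℤ)+1)):ℤ):ℝ)) = Real.exp t ^ (n+1) := by
        rw [← Real.exp_nat_mul]
        congr 1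
        push_cast
        ring
      rw [this, hc, hxdef, pow_succ, mul_pow]
      ring
  -- lintegral computation
  have hmeasint : Measurable fun ω => Real.exp (-t * (U ω : ℝ)) := by
    exact Real.measurable_exp.comp (measurable_const.mul (measurable_from_top.comp hU))
  have key : ∫⁻ ω, ENNReal.ofReal (Real.exp (-t * (U ω : ℝ))) ∂P
      = ENNReal.ofReal (∑' n, s n) := by
    have hg : Measurable fun k : ℤ => ENNReal.ofReal (Real.exp (-t * (k:ℝ))) :=
      measurable_from_top
    rw [← lintegral_map hg hU, lintegral_countable']
    rw [← hinj.tsum_eq hsupp]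
    rw [ENNReal.ofReal_tsum_of_nonneg hs0 hssum]
    exact tsum_congr hfe
  -- sum of the series
  have hsval : ∑' n, s n =
      Real.exp (-t) * (((D:ℝ) - ((B:ℝ)+(C:ℝ)))/D) + c * (1 - x)⁻¹ := by
    rw [Summable.tsum_eq_zero_add hssum]
    have h0 : s 0 = Real.exp (-t) * (((D:ℝ) - ((B:ℝ)+(C:ℝ)))/D) := by simp [hs]
    have h2 : (fun n => s (n+1)) = fun n => c * x ^ n := by
      funext n; simp [hs]
    rw [h0, h2, tsum_mul_left, tsum_geometric_of_lt_one hx0 hx1]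
  -- from integral to lintegral
  rw [integral_eq_lintegral_of_nonneg_ae
      (ae_of_all _ fun ω => (Real.exp_pos _).le) hmeasint.aestronglyMeasurable]
  have hx1' : (0:ℝ) ≤ 1 - x := by linarith
  have hsum0 : (0:ℝ) ≤ Real.exp (-t) * (((D:ℝ) - ((B:ℝ)+(C:ℝ)))/D) + c * (1 - x)⁻¹ :=
    add_nonneg (by positivity) (mul_nonneg hc0 (inv_nonneg.2 hx1'))
  rw [key, hsval, ENNReal.toReal_ofReal hsum0]
  -- final algebra
  have hne1 : ((D:ℝ) - ((B:ℝ)+(C:ℝ))) ≠ 0 := ne_of_gt hDBC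
  have hne2 : (D:ℝ) ≠ 0 := ne_of_gt hD'
  have hne3 : (D:ℝ) - (B:ℝ) - (C:ℝ) - Real.exp t * (B:ℝ) ≠ 0 := by
    have : (0:ℝ) < (D:ℝ) - (B:ℝ) - (C:ℝ) - Real.exp t * (B:ℝ) := by linarith
    exact ne_of_gt this
  have hkey2 : c * (1 - x)⁻¹ =
      (((B:ℝ)+(C:ℝ))/D) * Real.exp t *
        (((D:ℝ) - 2*(B:ℝ) - (C:ℝ)) / ((D:ℝ) - (B:ℝ) - (C:ℝ) - Real.exp t * (B:ℝ))) := by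
    rw [hc, hxdef, ha, hr]
    have e1 : 1 - Real.exp t * ((B:ℝ)/((D:ℝ)-((B:ℝ)+(C:ℝ)))) =
        ((D:ℝ)-(B:ℝ)-(C:ℝ)-Real.exp t*(B:ℝ))/((D:ℝ)-((B:ℝ)+(C:ℝ))) := by
      field_simp
      ring
    have e2 : 1 - (B:ℝ)/((D:ℝ)-((B:ℝ)+(C:ℝ))) =
        ((D:ℝ)-2*(B:ℝ)-(C:ℝ))/((D:ℝ)-((B:ℝ)+(C:ℝ))) := by
      field_simp; ring
    rw [e1, e2, inv_div]
    field_simp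
  rw [hkey2]
  ring
end

section
/- Let α ∈ (0, 1/2) and let (B_D)_{D} and (C_D)_{D} be sequences of positive integers with B_D = o(D^{1−2α}) and C_D = o(D^{1−2α}) as D → ∞ (so that in particular D > 3B_D + 2C_D for all sufficiently large D). For each such D let U_D be the integer-valued random variable with P(U_D = 1) = (D−(B_D+C_D))/D and P(U_D ≤ −j) = ((B_D+C_D)/D)·(B_D/(D−(B_D+C_D)))^{j−1} for all integers j ≥ 1, and let T_D = { t > 0 : E[e^{−tU_D}] < 1 }. Then sup_{t ∈ T_D} (−ln E[e^{−tU_D}])/(1+t) → 1 as D → ∞. -/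
open MeasureTheory ProbabilityTheory
open scoped ENNReal

/-- Point masses at negative integers from the tail formula. -/
lemma point_neg {Ω : Type*} [MeasurableSpace Ω] (P : Measure Ω) [IsProbabilityMeasure P]
    (U : Ω → ℤ) (hU : Measurable U) (q r : ℝ) (hq : 0 ≤ q) (hr : 0 ≤ r)
    (h2 : ∀ j : ℕ, 1 ≤ j → P {ω | U ω ≤ -(j:ℤ)} = ENNReal.ofReal (q * r ^ (j-1))) (n : ℕ) :
    P {ω | U ω = -(n+1:ℤ)} = ENNReal.ofReal (q * (1-r) * r ^ n) := by
  have hset : {ω | U ω = -(n+1:ℤ)}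
      = {ω | U ω ≤ -(((n+1:ℕ)):ℤ)} \ {ω | U ω ≤ -(((n+2:ℕ)):ℤ)} := by
    ext ω; simp only [Set.mem_setOf_eq, Set.mem_diff]; push_cast; omega
  have hsub : {ω | U ω ≤ -(((n+2:ℕ)):ℤ)} ⊆ {ω | U ω ≤ -(((n+1:ℕ)):ℤ)} := by
    intro ω hω; simp only [Set.mem_setOf_eq] at *; push_cast at *; omega
  have hm : MeasurableSet {ω | U ω ≤ -(((n+2:ℕ)):ℤ)} :=
    hU (show MeasurableSet (Set.Iic (-(((n+2:ℕ)):ℤ))) from trivial)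
  rw [hset, measure_diff hsub hm.nullMeasurableSet (measure_ne_top P _),
    h2 (n+1) (by omega), h2 (n+2) (by omega)]
  have e1 : n + 1 - 1 = n := rfl
  have e2 : n + 2 - 1 = n + 1 := rfl
  rw [e1, e2, ← ENNReal.ofReal_sub _ (by positivity)]
  congr 1
  ring

/-- Exact MGF formula. -/
lemma mgf_eq {Ω : Type*} [MeasurableSpace Ω] (P : Measure Ω) [IsProbabilityMeasure P]
    (U : Ω → ℤ) (hU : Measurable U) (p q r t : ℝ)
    (hp : 0 ≤ p) (hq : 0 ≤ q) (hr : 0 ≤ r) (hr1 : r ≤ 1) (hx : r * Real.exp t < 1)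
    (h1 : P {ω | U ω = 1} = ENNReal.ofReal p)
    (hneg : ∀ n : ℕ, P {ω | U ω = -(n+1:ℤ)} = ENNReal.ofReal (q * (1-r) * r ^ n))
    (h0 : ∀ k : ℤ, k ≠ 1 → ¬ k ≤ -1 → P {ω | U ω = k} = 0) :
    ∫⁻ ω, ENNReal.ofReal (Real.exp (-t * (U ω : ℝ))) ∂P
      = ENNReal.ofReal (p * Real.exp (-t)
          + q * (1-r) * Real.exp t / (1 - r * Real.exp t)) := by
  have hxe : 0 ≤ r * Real.exp t := by positivity
  have hmap : ∫⁻ ω, ENNReal.ofReal (Real.exp (-t * (U ω : ℝ))) ∂P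
      = ∑' k : ℤ, ENNReal.ofReal (Real.exp (-t * (k:ℝ))) * P {ω | U ω = k} := by
    have h := lintegral_map (μ := P) (g := U)
      (f := fun k : ℤ => ENNReal.ofReal (Real.exp (-t * (k:ℝ)))) measurable_from_top hU
    rw [← h, lintegral_countable']
    apply tsum_congr; intro k
    congr 1
    rw [Measure.map_apply hU (show MeasurableSet {k} from trivial)]
    rfl
  set e : ℕ → ℤ := fun n => if n = 0 then 1 else -(n:ℤ) with he
  have hinj : Function.Injective e := by
    intro m n h
    simp only [he] at h
    split_ifs at h <;> omega
  have hsupp : Function.support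
      (fun k : ℤ => ENNReal.ofReal (Real.exp (-t * (k:ℝ))) * P {ω | U ω = k})
      ⊆ Set.range e := by
    intro k hk
    by_cases hk1 : k = 1
    · exact ⟨0, by simp [he, hk1]⟩
    by_cases hkneg : k ≤ -1
    · refine ⟨k.natAbs, ?_⟩
      simp only [he]
      rw [if_neg (by omega)]
      omega
    · exfalso
      exact hk (by simp [h0 k hk1 hkneg])
  have hZ : ∑' k : ℤ, ENNReal.ofReal (Real.exp (-t * (k:ℝ))) * P {ω | U ω = k}
      = ∑' n : ℕ, ENNReal.ofReal (Real.exp (-t * ((e n):ℝ))) * P {ω | U ω = e n} :=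
    (hinj.tsum_eq hsupp).symm
  set a := q * (1-r) * Real.exp t with ha
  set x := r * Real.exp t with hxd
  have ha0 : 0 ≤ a := by
    apply mul_nonneg (mul_nonneg hq (by linarith)) (Real.exp_pos t).le
  set G : ℕ → ℝ := fun n => if n = 0 then p * Real.exp (-t) else a * x ^ (n-1) with hG
  have hterm : ∀ n : ℕ, ENNReal.ofReal (Real.exp (-t * ((e n):ℝ))) * P {ω | U ω = e n}
      = ENNReal.ofReal (G n) := by
    intro n
    cases n with
    | zero =>
      have h : e 0 = 1 := by simp [he]
      rw [h, h1, hG]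
      simp only [if_pos rfl]
      rw [← ENNReal.ofReal_mul (Real.exp_pos _).le]
      norm_num [mul_comm]
    | succ m =>
      have h : e (m+1) = -(m+1:ℤ) := by simp [he]
      rw [h, hneg m, hG]
      simp only [Nat.succ_ne_zero, if_neg, Nat.add_sub_cancel]
      rw [← ENNReal.ofReal_mul (Real.exp_pos _).le]
      congr 1
      have harg : (-t * (((-(m+1:ℤ)):ℤ):ℝ)) = ((m+1:ℕ):ℝ) * t := by push_cast; ring
      rw [harg, Real.exp_nat_mul, ha, hxd]
      push_cast
      ring
  have hsummable : Summable G := by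
    have hgeo : Summable (fun n : ℕ => a * x ^ n) :=
      (summable_geometric_of_lt_one hxe hx).mul_left a
    apply (summable_nat_add_iff 1).mp
    apply hgeo.congr
    intro n
    simp [hG]
  have hGnn : ∀ n, 0 ≤ G n := by
    intro n
    rcases n with _ | m
    · simp only [hG, if_pos rfl]
      positivity
    · simp only [hG, Nat.succ_ne_zero, if_neg, Nat.add_sub_cancel]
      positivity
  have hsum : (∑' n : ℕ, ENNReal.ofReal (G n))
      = ENNReal.ofReal (p * Real.exp (-t) + a * (1-x)⁻¹) := by
    rw [← ENNReal.ofReal_tsum_of_nonneg hGnn hsummable]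
    congr 1
    rw [Summable.tsum_eq_zero_add hsummable]
    have h0' : G 0 = p * Real.exp (-t) := by simp [hG]
    have hshift : ∀ n : ℕ, G (n+1) = a * x ^ n := by intro n; simp [hG]
    rw [h0']
    congr 1
    calc (∑' n : ℕ, G (n+1)) = ∑' n : ℕ, a * x ^ n := by
          apply tsum_congr; intro n; exact hshift n
    _ = a * (1-x)⁻¹ := by rw [tsum_mul_left, tsum_geometric_of_lt_one hxe hx]
  rw [hmap, hZ]
  calc (∑' n : ℕ, ENNReal.ofReal (Real.exp (-t * ((e n):ℝ))) * P {ω | U ω = e n})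
      = ∑' n : ℕ, ENNReal.ofReal (G n) := by apply tsum_congr; intro n; exact hterm n
  _ = ENNReal.ofReal (p * Real.exp (-t) + a * (1-x)⁻¹) := hsum
  _ = ENNReal.ofReal (p * Real.exp (-t) + q * (1-r) * Real.exp t / (1 - r * Real.exp t)) := by
      rw [div_eq_mul_inv]

/-- One-point lower bound for the MGF. -/
lemma mgf_lb {Ω : Type*} [MeasurableSpace Ω] (P : Measure Ω)
    (U : Ω → ℤ) (hU : Measurable U) (p t : ℝ)
    (h1 : P {ω | U ω = 1} = ENNReal.ofReal p) :
    ENNReal.ofReal (p * Real.exp (-t))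
      ≤ ∫⁻ ω, ENNReal.ofReal (Real.exp (-t * (U ω : ℝ))) ∂P := by
  have hms : MeasurableSet {ω | U ω = 1} :=
    hU (show MeasurableSet {(1:ℤ)} from trivial)
  have key : ∫⁻ ω in {ω | U ω = 1}, ENNReal.ofReal (Real.exp (-t * (U ω : ℝ))) ∂P
      = ENNReal.ofReal (Real.exp (-t)) * P {ω | U ω = 1} := by
    rw [← setLIntegral_const]
    apply setLIntegral_congr_fun hms
    intro ω hω
    simp only [Set.mem_setOf_eq] at hω
    simp only [hω]
    norm_num
  calc ENNReal.ofReal (p * Real.exp (-t))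
      = ENNReal.ofReal (Real.exp (-t)) * P {ω | U ω = 1} := by
        rw [h1, ← ENNReal.ofReal_mul (Real.exp_pos _).le, mul_comm]
  _ = ∫⁻ ω in {ω | U ω = 1}, ENNReal.ofReal (Real.exp (-t * (U ω : ℝ))) ∂P := key.symm
  _ ≤ ∫⁻ ω, ENNReal.ofReal (Real.exp (-t * (U ω : ℝ))) ∂P := setLIntegral_le_lintegral _ _

set_option maxHeartbeats 1000000 in
/-- Per-`D` estimates on the sup. -/
lemma perD {Ω : Type*} [MeasurableSpace Ω] (P : Measure Ω) [IsProbabilityMeasure P]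
    (U : Ω → ℤ) (hU : Measurable U) (b c d : ℝ)
    (hb1 : 1 ≤ b) (hc1 : 1 ≤ c) (hd : 0 < d)
    (hbd : b/d < 1/128) (hcd : c/d < 1/128)
    (h1 : P {ω | U ω = 1} = ENNReal.ofReal ((d - (b+c))/d))
    (h2 : ∀ j : ℕ, 1 ≤ j → P {ω | U ω ≤ -(j:ℤ)}
        = ENNReal.ofReal (((b+c)/d) * (b/(d-(b+c)))^(j-1)))
    (h0 : ∀ k : ℤ, k ≠ 1 → ¬ k ≤ -1 → P {ω | U ω = k} = 0) :
    (∀ x ∈ { x : ℝ | ∃ t : ℝ, 0 < t ∧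
        (∫⁻ ω, ENNReal.ofReal (Real.exp (-t * (U ω : ℝ))) ∂P) < 1 ∧
        x = (- Real.log
            ((∫⁻ ω, ENNReal.ofReal (Real.exp (-t * (U ω : ℝ))) ∂P).toReal)) / (1 + t) },
      x ≤ 1) ∧
    ((-(1/3) * Real.log ((b+c)/d) - Real.log 2) / (1 + -(1/3) * Real.log ((b+c)/d))
      ≤ sSup { x : ℝ | ∃ t : ℝ, 0 < t ∧
        (∫⁻ ω, ENNReal.ofReal (Real.exp (-t * (U ω : ℝ))) ∂P) < 1 ∧
        x = (- Real.log
            ((∫⁻ ω, ENNReal.ofReal (Real.exp (-t * (U ω : ℝ))) ∂P).toReal)) / (1 + t) }) := by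
  set q := (b+c)/d with hqdef
  set r := b/(d-(b+c)) with hrdef
  set p := (d - (b+c))/d with hpdef
  have hb' : b < d/128 := by rw [div_lt_iff₀ hd] at hbd; linarith
  have hc' : c < d/128 := by rw [div_lt_iff₀ hd] at hcd; linarith
  have hbc : b + c < d/64 := by linarith
  have hq0 : 0 < q := div_pos (by linarith) hd
  have hq64 : q < 1/64 := by
    rw [hqdef, div_lt_iff₀ hd]
    linarith
  have hdbc : d/2 < d - (b+c) := by linarith
  have hdbc0 : 0 < d - (b+c) := by linarith
  have hp0 : 0 < p := div_pos hdbc0 hd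
  have hpq : p = 1 - q := by
    rw [hpdef, hqdef, sub_div, div_self hd.ne']
  have hp1 : p ≤ 1 := by rw [hpq]; linarith
  have hp12 : 1/2 ≤ p := by rw [hpq]; linarith
  have hr0 : 0 < r := div_pos (by linarith) hdbc0
  have hr2q : r ≤ 2*q := by
    rw [hrdef, hqdef, show (2:ℝ) * ((b+c)/d) = (2*(b+c))/d by ring,
      div_le_div_iff₀ hdbc0 hd]
    nlinarith [mul_nonneg (by linarith : (0:ℝ) ≤ b+c) (by linarith : (0:ℝ) ≤ d - 2*(b+c))]
  have hr1 : r < 1 := by linarith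
  -- the special point s, t
  set s := q ^ ((1:ℝ)/3) with hsdef
  have hs0 : 0 < s := Real.rpow_pos_of_pos hq0 _
  clear_value s
  have hs3 : s^(3:ℕ) = q := by
    rw [hsdef, ← Real.rpow_natCast (q ^ ((1:ℝ)/3)) 3, ← Real.rpow_mul hq0.le]
    norm_num
  have hs14 : s ≤ 1/4 := by
    have h64 : ((1:ℝ)/64) ^ ((1:ℝ)/3) = 1/4 := by
      rw [show (1:ℝ)/64 = ((1:ℝ)/4)^(3:ℕ) by norm_num,
        ← Real.rpow_natCast ((1:ℝ)/4) 3, ← Real.rpow_mul (by norm_num)]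
      norm_num
    rw [hsdef]
    calc q ^ ((1:ℝ)/3) ≤ ((1:ℝ)/64) ^ ((1:ℝ)/3) :=
          Real.rpow_le_rpow hq0.le hq64.le (by norm_num)
    _ = 1/4 := h64
  set t := -(1/3) * Real.log q with htdef
  clear_value t
  have hts : t = -Real.log s := by
    rw [htdef, hsdef, Real.log_rpow hq0]; ring
  have hexpnt : Real.exp (-t) = s := by
    have h : -t = Real.log s := by rw [hts]; ring
    rw [h, Real.exp_log hs0]
  have hexpt : Real.exp t = 1/s := by
    have : Real.exp t * Real.exp (-t) = 1 := by
      rw [← Real.exp_add]; simp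
    rw [hexpnt] at this
    field_simp at this ⊢
    linarith
  have ht0 : 0 < t := by
    rw [hts]
    have : Real.log s < 0 := Real.log_neg hs0 (by linarith)
    linarith
  have hx18 : r * Real.exp t ≤ 1/8 := by
    rw [hexpt]
    have h1' : r * (1/s) ≤ 2*q * (1/s) :=
      mul_le_mul_of_nonneg_right hr2q (by positivity)
    have h2' : 2*q * (1/s) = 2*s^2 := by
      rw [← hs3]; field_simp
    nlinarith [hs0.le, hs14]
  have hxlt : r * Real.exp t < 1 := by linarith
  have hneg := point_neg P U hU q r hq0.le hr0.le
    (by intro j hj; rw [hqdef, hrdef]; exact h2 j hj)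
  have hmgf := mgf_eq P U hU p q r t hp0.le hq0.le hr0.le hr1.le hxlt
    (by rw [hpdef]; exact h1) hneg h0
  set F := p * Real.exp (-t) + q * (1-r) * Real.exp t / (1 - r * Real.exp t) with hF
  clear_value F
  have hxF0 : (0:ℝ) < 1 - r * Real.exp t := by linarith
  have h2nd : 0 ≤ q * (1-r) * Real.exp t / (1 - r * Real.exp t) :=
    div_nonneg (mul_nonneg (mul_nonneg hq0.le (by linarith)) (Real.exp_pos _).le) hxF0.le
  have h1st : 0 < p * Real.exp (-t) := mul_pos hp0 (Real.exp_pos _)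
  have hF0 : 0 < F := by rw [hF]; linarith
  have hFle : F ≤ 2*s := by
    have e1 : p * Real.exp (-t) ≤ s := by
      rw [hexpnt]; nlinarith [hs0.le]
    have hnum : q * (1-r) * Real.exp t ≤ s^2 := by
      rw [hexpt]
      have hq1 : q * (1-r) ≤ q := by nlinarith
      have : q * (1-r) * (1/s) ≤ q * (1/s) :=
        mul_le_mul_of_nonneg_right hq1 (by positivity)
      have hqs : q * (1/s) = s^2 := by rw [← hs3]; field_simp
      linarith
    have hden : (7:ℝ)/8 ≤ 1 - r * Real.exp t := by linarith
    have e2 : q * (1-r) * Real.exp t / (1 - r * Real.exp t) ≤ s^2/(7/8) := by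
      apply div_le_div₀ (sq_nonneg s) hnum (by norm_num) hden
    have e3 : s^2/(7/8) ≤ s := by nlinarith [hs0.le, hs14]
    linarith
  have h2s : 2*s ≤ 1/2 := by linarith
  have hlt1 : ENNReal.ofReal F < 1 := by
    rw [← ENNReal.ofReal_one]
    exact (ENNReal.ofReal_lt_ofReal_iff one_pos).mpr (by linarith)
  -- upper bound for all elements
  have hub : ∀ x ∈ { x : ℝ | ∃ t : ℝ, 0 < t ∧
        (∫⁻ ω, ENNReal.ofReal (Real.exp (-t * (U ω : ℝ))) ∂P) < 1 ∧
        x = (- Real.log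
            ((∫⁻ ω, ENNReal.ofReal (Real.exp (-t * (U ω : ℝ))) ∂P).toReal)) / (1 + t) },
      x ≤ 1 := by
    rintro x ⟨t', ht'0, hlt, hxeq⟩
    set I := ∫⁻ ω, ENNReal.ofReal (Real.exp (-t' * (U ω : ℝ))) ∂P with hI
    have hItop : I ≠ ⊤ := (hlt.trans ENNReal.one_lt_top).ne
    have hlb := mgf_lb P U hU p t' (by rw [hpdef]; exact h1)
    have hIlb : p * Real.exp (-t') ≤ I.toReal :=
      (ENNReal.ofReal_le_iff_le_toReal hItop).mp hlb
    have hIub : I.toReal < 1 := by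
      have := (ENNReal.toReal_lt_toReal hItop ENNReal.one_ne_top).mpr hlt
      simpa using this
    have hm0 : 0 < I.toReal := lt_of_lt_of_le (by positivity) hIlb
    have hlogp : -1 ≤ Real.log p := by
      have hl2 : Real.log 2 ≤ 1 := by
        linarith [Real.log_le_sub_one_of_pos (by norm_num : (0:ℝ) < 2)]
      have hmono : Real.log (1/2) ≤ Real.log p :=
        Real.log_le_log (by norm_num) hp12
      rw [show (1:ℝ)/2 = 2⁻¹ by norm_num, Real.log_inv] at hmono
      linarith
    have hlg : Real.log (p * Real.exp (-t')) ≤ Real.log I.toReal :=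
      Real.log_le_log (by positivity) hIlb
    rw [Real.log_mul hp0.ne' (Real.exp_ne_zero _), Real.log_exp] at hlg
    rw [hxeq, div_le_one (by linarith)]
    linarith
  refine ⟨hub, ?_⟩
  -- the chosen element
  have hmem : (- Real.log
        ((∫⁻ ω, ENNReal.ofReal (Real.exp (-t * (U ω : ℝ))) ∂P).toReal)) / (1 + t)
      ∈ { x : ℝ | ∃ t : ℝ, 0 < t ∧
        (∫⁻ ω, ENNReal.ofReal (Real.exp (-t * (U ω : ℝ))) ∂P) < 1 ∧
        x = (- Real.log
            ((∫⁻ ω, ENNReal.ofReal (Real.exp (-t * (U ω : ℝ))) ∂P).toReal)) / (1 + t) } :=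
    ⟨t, ht0, by rw [hmgf]; exact hlt1, rfl⟩
  have hbdd : BddAbove { x : ℝ | ∃ t : ℝ, 0 < t ∧
        (∫⁻ ω, ENNReal.ofReal (Real.exp (-t * (U ω : ℝ))) ∂P) < 1 ∧
        x = (- Real.log
            ((∫⁻ ω, ENNReal.ofReal (Real.exp (-t * (U ω : ℝ))) ∂P).toReal)) / (1 + t) } :=
    ⟨1, hub⟩
  have hle := le_csSup hbdd hmem
  refine le_trans ?_ hle
  -- lower bound on the chosen element
  rw [hmgf, ENNReal.toReal_ofReal hF0.le]
  have hlogF : Real.log F ≤ Real.log 2 + Real.log s := by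
    have h := Real.log_le_log hF0 hFle
    rwa [Real.log_mul (by norm_num) hs0.ne'] at h
  have hkey : t - Real.log 2 ≤ -Real.log F := by
    rw [hts]; linarith
  exact (div_le_div_iff_of_pos_right (by linarith)).mpr hkey

/-- If `B_D, C_D = o(D^{1-2α})` for some `α ∈ (0, 1/2)`, then
the drift estimate `sup_{t ∈ T_D} (-ln E[e^{-t U_D}])/(1+t)` tends to `1` as
`D → ∞`. -/
theorem drift_estimate_tendsto_one (α : ℝ) (hα : α ∈ Set.Ioo (0:ℝ) (1/2 : ℝ))
    (B C : ℕ → ℕ) (hBpos : ∀ D, 0 < B D) (hCpos : ∀ D, 0 < C D)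
    (hB : Filter.Tendsto (fun D : ℕ => (B D : ℝ) / (D:ℝ) ^ ((1:ℝ) - 2 * α))
      Filter.atTop (nhds 0))
    (hC : Filter.Tendsto (fun D : ℕ => (C D : ℝ) / (D:ℝ) ^ ((1:ℝ) - 2 * α))
      Filter.atTop (nhds 0))
    (Ω : ℕ → Type*) [∀ D, MeasurableSpace (Ω D)]
    (P : ∀ D, Measure (Ω D)) (hP : ∀ D, IsProbabilityMeasure (P D))
    (U : ∀ D, Ω D → ℤ) (hU : ∀ D, Measurable (U D))
    (hU1 : ∀ D, D > 3 * B D + 2 * C D →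
      P D {ω | U D ω = 1} =
        ENNReal.ofReal (((D:ℝ) - ((B D : ℝ) + (C D : ℝ))) / (D:ℝ)))
    (hU2 : ∀ D, D > 3 * B D + 2 * C D → ∀ j : ℕ, 1 ≤ j →
      P D {ω | U D ω ≤ -(j:ℤ)} =
        ENNReal.ofReal ((((B D : ℝ) + (C D : ℝ)) / (D:ℝ)) *
          ((B D : ℝ) / ((D:ℝ) - ((B D : ℝ) + (C D : ℝ)))) ^ (j - 1)))
    (hU0 : ∀ D, D > 3 * B D + 2 * C D → ∀ k : ℤ, k ≠ 1 → ¬ k ≤ -1 →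
      P D {ω | U D ω = k} = 0) :
    Filter.Tendsto (fun D : ℕ =>
      sSup { x : ℝ | ∃ t : ℝ, 0 < t ∧
        (∫⁻ ω, ENNReal.ofReal (Real.exp (-t * (U D ω : ℝ))) ∂(P D)) < 1 ∧
        x = (- Real.log
            ((∫⁻ ω, ENNReal.ofReal (Real.exp (-t * (U D ω : ℝ))) ∂(P D)).toReal))
          / (1 + t) })
      Filter.atTop (nhds 1) := by
  obtain ⟨hα0, hα2⟩ := hα
  have key : ∀ E : ℕ → ℕ,
      Filter.Tendsto (fun D : ℕ => (E D : ℝ) / (D:ℝ) ^ ((1:ℝ) - 2 * α))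
        Filter.atTop (nhds 0) →
      Filter.Tendsto (fun D : ℕ => (E D : ℝ) / (D:ℝ)) Filter.atTop (nhds 0) := by
    intro E hE
    apply tendsto_of_tendsto_of_tendsto_of_le_of_le' tendsto_const_nhds hE
    · filter_upwards [Filter.eventually_ge_atTop 1] with D hD
      have hd : (0:ℝ) < D := by exact_mod_cast Nat.lt_of_lt_of_le Nat.zero_lt_one hD
      positivity
    · filter_upwards [Filter.eventually_ge_atTop 1] with D hD
      have hd1 : (1:ℝ) ≤ D := by exact_mod_cast hD
      have hexp : (D:ℝ) ^ ((1:ℝ) - 2*α) ≤ (D:ℝ) := by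
        calc (D:ℝ) ^ ((1:ℝ) - 2*α) ≤ (D:ℝ) ^ (1:ℝ) :=
              Real.rpow_le_rpow_of_exponent_le hd1 (by linarith)
        _ = D := Real.rpow_one _
      have hpos : (0:ℝ) < (D:ℝ) ^ ((1:ℝ) - 2*α) := Real.rpow_pos_of_pos (by linarith) _
      gcongr
  have hBD := key B hB
  have hCD := key C hC
  have hqten : Filter.Tendsto (fun D : ℕ => ((B D:ℝ)+(C D:ℝ))/(D:ℝ))
      Filter.atTop (nhds 0) := by
    have h := hBD.add hCD
    rw [add_zero] at h
    apply h.congr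
    intro D
    rw [← add_div]
  have hqpos : ∀ᶠ D : ℕ in Filter.atTop,
      ((B D:ℝ)+(C D:ℝ))/(D:ℝ) ∈ Set.Ioi (0:ℝ) := by
    filter_upwards [Filter.eventually_ge_atTop 1] with D hD
    have hd : (0:ℝ) < D := by exact_mod_cast Nat.lt_of_lt_of_le Nat.zero_lt_one hD
    have hb1 : (1:ℝ) ≤ (B D:ℝ) := by exact_mod_cast hBpos D
    have hc1 : (1:ℝ) ≤ (C D:ℝ) := by exact_mod_cast hCpos D
    exact Set.mem_Ioi.mpr (div_pos (by linarith) hd)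
  have hlog : Filter.Tendsto (fun D : ℕ => Real.log (((B D:ℝ)+(C D:ℝ))/(D:ℝ)))
      Filter.atTop Filter.atBot := by
    apply Filter.Tendsto.comp Real.tendsto_log_nhdsGT_zero
    exact tendsto_nhdsWithin_of_tendsto_nhds_of_eventually_within _ hqten hqpos
  have htt : Filter.Tendsto (fun D : ℕ => -(1/3) * Real.log (((B D:ℝ)+(C D:ℝ))/(D:ℝ)))
      Filter.atTop Filter.atTop := by
    have h1 : Filter.Tendsto (fun D : ℕ => -Real.log (((B D:ℝ)+(C D:ℝ))/(D:ℝ)))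
        Filter.atTop Filter.atTop := Filter.tendsto_neg_atBot_atTop.comp hlog
    have h2 := Filter.Tendsto.const_mul_atTop (by norm_num : (0:ℝ) < 1/3) h1
    apply h2.congr
    intro D
    ring
  have hphi : Filter.Tendsto (fun u : ℝ => (u - Real.log 2)/(1+u))
      Filter.atTop (nhds 1) := by
    have h1 : Filter.Tendsto (fun u:ℝ => 1 - (1+Real.log 2)/(1+u))
        Filter.atTop (nhds (1 - 0)) :=
      Filter.Tendsto.sub tendsto_const_nhds
        (Filter.Tendsto.div_atTop tendsto_const_nhds
          (Filter.tendsto_atTop_add_const_left _ 1 Filter.tendsto_id))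
    rw [sub_zero] at h1
    apply h1.congr'
    filter_upwards [Filter.eventually_gt_atTop 0] with u hu
    field_simp
    ring
  have hLten : Filter.Tendsto (fun D : ℕ =>
      (-(1/3) * Real.log (((B D:ℝ)+(C D:ℝ))/(D:ℝ)) - Real.log 2) /
        (1 + -(1/3) * Real.log (((B D:ℝ)+(C D:ℝ))/(D:ℝ)))) Filter.atTop (nhds 1) :=
    hphi.comp htt
  have hEv : ∀ᶠ D : ℕ in Filter.atTop,
      (∀ x ∈ { x : ℝ | ∃ t : ℝ, 0 < t ∧
        (∫⁻ ω, ENNReal.ofReal (Real.exp (-t * (U D ω : ℝ))) ∂(P D)) < 1 ∧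
        x = (- Real.log
            ((∫⁻ ω, ENNReal.ofReal (Real.exp (-t * (U D ω : ℝ))) ∂(P D)).toReal))
          / (1 + t) }, x ≤ 1) ∧
      ((-(1/3) * Real.log (((B D:ℝ)+(C D:ℝ))/(D:ℝ)) - Real.log 2) /
        (1 + -(1/3) * Real.log (((B D:ℝ)+(C D:ℝ))/(D:ℝ)))
        ≤ sSup { x : ℝ | ∃ t : ℝ, 0 < t ∧
        (∫⁻ ω, ENNReal.ofReal (Real.exp (-t * (U D ω : ℝ))) ∂(P D)) < 1 ∧
        x = (- Real.log
            ((∫⁻ ω, ENNReal.ofReal (Real.exp (-t * (U D ω : ℝ))) ∂(P D)).toReal))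
          / (1 + t) }) := by
    filter_upwards [hBD (Iio_mem_nhds (by norm_num : (0:ℝ) < 1/128)),
      hCD (Iio_mem_nhds (by norm_num : (0:ℝ) < 1/128)),
      Filter.eventually_ge_atTop 1] with D hbm hcm hD1
    have hd : (0:ℝ) < D := by exact_mod_cast Nat.lt_of_lt_of_le Nat.zero_lt_one hD1
    have hb1 : (1:ℝ) ≤ (B D:ℝ) := by exact_mod_cast hBpos D
    have hc1 : (1:ℝ) ≤ (C D:ℝ) := by exact_mod_cast hCpos D
    have hb : (B D:ℝ)/(D:ℝ) < 1/128 := hbm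
    have hc : (C D:ℝ)/(D:ℝ) < 1/128 := hcm
    have hDgt : D > 3 * B D + 2 * C D := by
      have hb' : (B D:ℝ) < (D:ℝ)/128 := by rw [div_lt_iff₀ hd] at hb; linarith
      have hc' : (C D:ℝ) < (D:ℝ)/128 := by rw [div_lt_iff₀ hd] at hc; linarith
      have hgt : (3*(B D:ℝ) + 2*(C D:ℝ)) < (D:ℝ) := by linarith
      have : ((3 * B D + 2 * C D : ℕ) : ℝ) < (D:ℝ) := by push_cast; linarith
      exact_mod_cast this
    exact perD (P D) (U D) (hU D) (B D) (C D) (D:ℝ) hb1 hc1 hd hb hc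
      (hU1 D hDgt) (hU2 D hDgt) (hU0 D hDgt)
  apply tendsto_of_tendsto_of_tendsto_of_le_of_le' hLten tendsto_const_nhds
  · filter_upwards [hEv] with D hD
    exact hD.2
  · filter_upwards [hEv] with D hD
    exact Real.sSup_le hD.1 zero_le_one
end
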